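/- arXiv:2404.16352 — 2 statements merged into one kernel-verified Lean document; each statement's English description precedes it below -/
import Mathlib

section
/- (Three-gap structure at n = n_m) Let α be irrational, let s_m, n_m, η_m be defined as usual, and fix m ≥ 1. Consider the first n = n_m points of the Kronecker sequence iα mod 1, sorted in increasing order as 0 = x⁽⁰⁾ < x⁽¹⁾ < ⋯ < x⁽ⁿ⁻¹⁾ < 1 = x⁽ⁿ⁾. Then among the n consecutive gap lengths x⁽ⁱ⁺¹⁾ − x⁽ⁱ⁾, exactly s_{m−1} are equal to η_m and exactly s_m are equal to η_{m−1}. -/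
open scoped BigOperators

/-- The Gauss-map iterates: `alphaSeq α m` is `α_m`. -/
noncomputable def alphaSeq (α : ℝ) : ℕ → ℝ
  | 0 => Int.fract α
  | m + 1 => Int.fract (1 / alphaSeq α m)

/-- Partial quotients of the continued fraction of `α`: `partialQuot α (m+1) = a_{m+1} = ⌊1/α_m⌋`. -/
noncomputable def partialQuot (α : ℝ) : ℕ → ℕ
  | 0 => (⌊α⌋).toNat
  | m + 1 => (⌊1 / alphaSeq α m⌋).toNat

/-- `eta α (m+1) = η_m = ∏_{j=0}^m α_j`, with `eta α 0 = η_{-1} = 1`. -/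
noncomputable def eta (α : ℝ) : ℕ → ℝ
  | 0 => 1
  | m + 1 => eta α m * alphaSeq α m

/-- `denomSeq α m = s_m`. -/
noncomputable def denomSeq (α : ℝ) : ℕ → ℕ
  | 0 => 1
  | 1 => partialQuot α 1
  | m + 2 => partialQuot α (m + 2) * denomSeq α (m + 1) + denomSeq α m

/-- `denomPred α m = s_{m-1}`, with `s_{-1} = 0`. -/
noncomputable def denomPred (α : ℝ) : ℕ → ℕ
  | 0 => 0
  | m + 1 => denomSeq α m

/-- `nSeq α m = n_m = s_m + s_{m-1}` (so `n_0 = 1`). -/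
noncomputable def nSeq (α : ℝ) (m : ℕ) : ℕ := denomSeq α m + denomPred α m

/-- The Kronecker sequence `x_i = iα mod 1`. -/
noncomputable def kron (α : ℝ) (i : ℕ) : ℝ := Int.fract (i * α)

/-- Fill distance of the first `n` points of `x` in `[0,1]`. -/
noncomputable def fillDist (x : ℕ → ℝ) (n : ℕ) : ℝ :=
  ⨆ y : Set.Icc (0:ℝ) 1, ⨅ i : Fin n, |(y : ℝ) - x i|

/-- Separation radius of the first `n` points of `x`. -/
noncomputable def sepRad (x : ℕ → ℝ) (n : ℕ) : ℝ :=
  (1 / 2) * ⨅ p : {p : Fin n × Fin n // p.1 < p.2}, |x p.1.1 - x p.1.2|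

/-- The first `n` Kronecker points, sorted increasingly. -/
noncomputable def sortedKron (α : ℝ) (n : ℕ) : List ℝ :=
  ((Finset.range n).image (kron α)).sort (· ≤ ·)

/-- The `n` consecutive gap lengths of the first `n` Kronecker points,
including the wrap-around gap up to `1`. -/
noncomputable def kronGaps (α : ℝ) (n : ℕ) : List ℝ :=
  List.zipWith (fun a b => b - a) (sortedKron α n) ((sortedKron α n).tail ++ [1])
set_option linter.unusedSectionVars false

namespace ThreeGapAux

lemma irr_fract {x : ℝ} (h : Irrational x) : Irrational (Int.fract x) := by
  rw [Int.fract]; exact h.sub_intCast _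

lemma irr_pos {x : ℝ} (h : Irrational x) (hx : 0 ≤ x) : 0 < x := by
  rcases hx.lt_or_eq with h' | h'
  · exact h'
  · exact absurd h'.symm (by simpa using h.ne_int 0)

variable {α : ℝ} (hirr : Irrational α)
include hirr

lemma alpha_irr : ∀ m, Irrational (alphaSeq α m)
  | 0 => irr_fract hirr
  | (m+1) => by
      have h := alpha_irr (m)
      have h2 : Irrational (1 / alphaSeq α m) := by rw [one_div]; exact h.inv
      exact irr_fract h2

lemma alpha_pos (m : ℕ) : 0 < alphaSeq α m := by
  have h := alpha_irr hirr m
  cases m with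
  | zero => exact irr_pos h (Int.fract_nonneg _)
  | succ k => exact irr_pos h (Int.fract_nonneg _)

lemma alpha_lt_one (m : ℕ) : alphaSeq α m < 1 := by
  cases m with
  | zero => exact Int.fract_lt_one _
  | succ k => exact Int.fract_lt_one _

lemma one_lt_inv_alpha (m : ℕ) : 1 < 1 / alphaSeq α m :=
  by rw [one_div]; exact one_lt_inv_iff₀.mpr ⟨alpha_pos hirr m, alpha_lt_one hirr m⟩

lemma a_pos (m : ℕ) : 1 ≤ partialQuot α (m+1) := by
  have h : (1:ℤ) ≤ ⌊1 / alphaSeq α m⌋ := by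
    rw [Int.le_floor]; exact_mod_cast (one_lt_inv_alpha hirr m).le
  show 1 ≤ (⌊1 / alphaSeq α m⌋).toNat
  omega

lemma a_cast (m : ℕ) : ((partialQuot α (m+1) : ℕ) : ℝ) = (⌊1 / alphaSeq α m⌋ : ℤ) := by
  have h : (1:ℤ) ≤ ⌊1 / alphaSeq α m⌋ := by
    rw [Int.le_floor]; exact_mod_cast (one_lt_inv_alpha hirr m).le
  show (((⌊1 / alphaSeq α m⌋).toNat : ℕ) : ℝ) = _
  exact_mod_cast congrArg (Int.cast : ℤ → ℝ) (Int.toNat_of_nonneg (by omega))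

lemma inv_alpha (m : ℕ) :
    1 / alphaSeq α m = partialQuot α (m+1) + alphaSeq α (m+1) := by
  rw [a_cast hirr m]
  show _ = _ + alphaSeq α (m+1)
  rw [show alphaSeq α (m+1) = Int.fract (1 / alphaSeq α m) from rfl, Int.fract]
  ring

lemma eta_pos (k : ℕ) : 0 < eta α k := by
  induction k with
  | zero => norm_num [eta]
  | succ n ih => exact mul_pos ih (alpha_pos hirr n)

lemma eta_succ_lt (k : ℕ) : eta α (k+1) < eta α k := by
  have := eta_pos hirr k
  calc eta α (k+1) = eta α k * alphaSeq α k := rfl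
    _ < eta α k * 1 := by
        exact mul_lt_mul_of_pos_left (alpha_lt_one hirr k) this
    _ = eta α k := mul_one _

lemma eta_rec (k : ℕ) :
    eta α k = partialQuot α (k+1) * eta α (k+1) + eta α (k+2) := by
  have hne : alphaSeq α k ≠ 0 := (alpha_pos hirr k).ne'
  have h1 : eta α (k+1) = eta α k * alphaSeq α k := rfl
  have h2 : eta α (k+2) = eta α (k+1) * alphaSeq α (k+1) := rfl
  have h3 := inv_alpha hirr k
  field_simp at h3
  -- h3 : 1 = (partialQuot α (k+1) + alphaSeq α (k+1)) * alphaSeq α k  (some form)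
  rw [h2, h1]
  nlinarith [eta_pos hirr k, alpha_pos hirr k]


/-- numerators of convergents -/
noncomputable def pNum (α : ℝ) : ℕ → ℕ
  | 0 => 0
  | 1 => 1
  | m + 2 => partialQuot α (m + 2) * pNum α (m + 1) + pNum α m

lemma denom_pos : ∀ m, 1 ≤ denomSeq α m
  | 0 => le_refl _
  | 1 => a_pos hirr 0
  | (m+2) => by
      have h1 := denom_pos (m+1)
      show 1 ≤ partialQuot α (m + 2) * denomSeq α (m + 1) + denomSeq α m
      nlinarith [a_pos hirr (m+1)]

lemma denom_mono (m : ℕ) : denomSeq α m ≤ denomSeq α (m+1) := by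
  cases m with
  | zero => exact a_pos hirr 0
  | succ k =>
      show denomSeq α (k+1) ≤ partialQuot α (k + 2) * denomSeq α (k + 1) + denomSeq α k
      nlinarith [a_pos hirr (k+1), denom_pos hirr (k+1), denom_pos hirr k]

lemma key_lin : ∀ m, (denomSeq α m : ℝ) * Int.fract α - (pNum α m : ℝ)
    = (-1)^m * eta α (m+1)
  | 0 => by
      simp only [denomSeq, pNum, pow_zero, Nat.cast_one, Nat.cast_zero]
      show (1:ℝ) * Int.fract α - 0 = 1 * (1 * Int.fract α)
      ring
  | 1 => by
      simp only [denomSeq, pNum, Nat.cast_one]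
      have h := inv_alpha hirr 0
      have hpos := alpha_pos hirr 0
      have h0 : alphaSeq α 0 = Int.fract α := rfl
      have h2 : eta α (1+1) = 1 * alphaSeq α 0 * alphaSeq α 1 := rfl
      rw [h2, ← h0]
      field_simp at h
      nlinarith [h]
  | (m+2) => by
      have h1 := key_lin (m+1)
      have h0 := key_lin m
      have hrec := eta_rec hirr (m+1)
      have hd0 : denomSeq α (m+2) = partialQuot α (m + 2) * denomSeq α (m + 1) + denomSeq α m := rfl
      have hp0 : pNum α (m+2) = partialQuot α (m + 2) * pNum α (m + 1) + pNum α m := rfl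
      have hd := congrArg (Nat.cast : ℕ → ℝ) hd0
      have hp := congrArg (Nat.cast : ℕ → ℝ) hp0
      push_cast at hd hp
      rw [hd, hp]
      have hpow : (-1:ℝ)^(m+2) = (-1)^m := by ring
      have h1' : (-1:ℝ)^(m+1) = -(-1)^m := by ring
      rw [hpow]
      rw [h1'] at h1
      linear_combination (partialQuot α (m+2) : ℝ) * h1 + h0 + ((-1:ℝ)^m) * hrec

lemma unimod : ∀ m, (pNum α (m+1) : ℤ) * (denomSeq α m : ℤ)
    - (pNum α m : ℤ) * (denomSeq α (m+1) : ℤ) = (-1)^m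
  | 0 => by norm_num [pNum, denomSeq]
  | (m+1) => by
      have h := unimod m
      have hd0 : denomSeq α (m+2) = partialQuot α (m + 2) * denomSeq α (m + 1) + denomSeq α m := rfl
      have hp0 : pNum α (m+2) = partialQuot α (m + 2) * pNum α (m + 1) + pNum α m := rfl
      have hd := congrArg (Nat.cast : ℕ → ℤ) hd0
      have hp := congrArg (Nat.cast : ℕ → ℤ) hp0
      push_cast at hd hp
      rw [hd, hp]
      have hpow : (-1:ℤ)^(m+1) = -(-1)^m := by ring
      rw [hpow]
      linear_combination (-1 : ℤ) * h

lemma decomp (m : ℕ) (k p : ℤ) :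
    ∃ x y : ℤ, k = x * (denomSeq α (m+1) : ℤ) + y * (denomSeq α m : ℤ)
      ∧ p = x * (pNum α (m+1) : ℤ) + y * (pNum α m : ℤ) := by
  have h := unimod hirr m
  have h2 : ((-1:ℤ)^m) * ((-1:ℤ)^m) = 1 := by
    rw [← pow_add]; exact Even.neg_one_pow ⟨m, rfl⟩
  refine ⟨(-1)^m * (p * (denomSeq α m : ℤ) - k * (pNum α m : ℤ)),
          (-1)^m * (k * (pNum α (m+1) : ℤ) - p * (denomSeq α (m+1) : ℤ)), ?_, ?_⟩
  · linear_combination (-(-1:ℤ)^m * k) * h + (-k) * h2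
  · linear_combination (-(-1:ℤ)^m * p) * h + (-p) * h2


lemma eta_lt_one (k : ℕ) : eta α (k+1) < 1 := by
  induction k with
  | zero =>
      show 1 * alphaSeq α 0 < 1
      rw [one_mul]; exact alpha_lt_one hirr 0
  | succ n ih => exact lt_trans (eta_succ_lt hirr (n+1)) ih

omit hirr in
lemma neg_one_sq_int (m : ℕ) : ((-1:ℤ)^m) * ((-1:ℤ)^m) = 1 := by
  rw [← pow_add]; exact Even.neg_one_pow ⟨m, rfl⟩

lemma master_core (m : ℕ) (k p : ℤ) (hk : k ≠ 0)
    (hkn : |k| < (denomSeq α (m+1) : ℤ) + (denomSeq α m : ℤ)) :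
    ∃ X Y : ℤ, ¬(X = 0 ∧ Y = 0) ∧
      k = (-1)^(m+1) * (X * (denomSeq α (m+1) : ℤ) - Y * (denomSeq α m : ℤ)) ∧
      ((k:ℝ) * Int.fract α - p = X * eta α (m+2) + Y * eta α (m+1)) ∧
      0 ≤ X * Y ∧ (Y = 0 → X = 1 ∨ X = -1) := by
  obtain ⟨x, y, hxk, hxp⟩ := decomp hirr m k p
  set e : ℤ := (-1)^m with he_def
  have he2 : e * e = 1 := neg_one_sq_int m
  have hepow : ((-1:ℤ))^(m+1) = -e := by rw [pow_succ]; ring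
  have he1 : e = 1 ∨ e = -1 := by
    rcases Nat.even_or_odd m with h | h
    · left; exact Even.neg_one_pow h
    · right; exact Odd.neg_one_pow h
  have hQ01 : (denomSeq α m : ℤ) ≤ (denomSeq α (m+1) : ℤ) := by
    exact_mod_cast denom_mono hirr m
  have hQ0p : (1:ℤ) ≤ (denomSeq α m : ℤ) := by exact_mod_cast denom_pos hirr m
  have habs : |x * (denomSeq α (m+1) : ℤ) + y * (denomSeq α m : ℤ)|
      < (denomSeq α (m+1) : ℤ) + (denomSeq α m : ℤ) := by rw [← hxk]; exact hkn
  rw [abs_lt] at habs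
  refine ⟨-e * x, e * y, ?_, ?_, ?_, ?_, ?_⟩
  · rintro ⟨hX, hY⟩
    have hx0 : x = 0 := by rcases he1 with h | h <;> rw [h] at hX <;> omega
    have hy0 : y = 0 := by rcases he1 with h | h <;> rw [h] at hY <;> omega
    exact hk (by rw [hxk, hx0, hy0]; ring)
  · rw [hxk, hepow]
    linear_combination (-(x * (denomSeq α (m+1) : ℤ) + y * (denomSeq α m : ℤ))) * he2
  · have hQ1 := key_lin hirr (m+1)
    have hQ0 := key_lin hirr m
    have hv : (k:ℝ) * Int.fract α - p
        = (x:ℝ) * ((denomSeq α (m+1) : ℝ) * Int.fract α - (pNum α (m+1) : ℝ))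
          + (y:ℝ) * ((denomSeq α m : ℝ) * Int.fract α - (pNum α m : ℝ)) := by
      have hxk' := congrArg (Int.cast : ℤ → ℝ) hxk
      have hxp' := congrArg (Int.cast : ℤ → ℝ) hxp
      push_cast at hxk' hxp'
      rw [hxk', hxp']; ring
    have hepowR : ((-1:ℝ))^(m+1) = -((-1:ℝ)^m) := by rw [pow_succ]; ring
    rw [hv, hQ1, hQ0, hepowR]
    push_cast [he_def]
    ring
  · -- sign compatibility: 0 ≤ (-e x)(e y) = - e^2 x y = - x y
    have hxy : -e * x * (e * y) = - (x * y) := by linear_combination (-(x*y)) * he2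
    rw [hxy]
    by_contra hcon
    push_neg at hcon
    have hxy' : 0 < x * y := by omega
    rcases lt_trichotomy x 0 with hx | hx | hx
    · have hy : y ≤ -1 := by nlinarith
      nlinarith
    · simp [hx] at hxy'
    · have hy : 1 ≤ y := by nlinarith
      nlinarith
  · intro hY
    have hy0 : y = 0 := by rcases he1 with h | h <;> rw [h] at hY <;> omega
    rw [hy0] at habs
    simp only [zero_mul, add_zero] at habs
    have hx0 : x ≠ 0 := fun h0 => hk (by rw [hxk, h0, hy0]; ring)
    have hx1 : x = 1 ∨ x = -1 := by
      rcases lt_trichotomy x 0 with hx | hx | hx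
      · right; nlinarith
      · exact absurd hx hx0
      · left; nlinarith
    rcases he1 with h | h <;> rcases hx1 with h' | h' <;> rw [h, h'] <;> norm_num


lemma master_lower (m : ℕ) (k p : ℤ) (hk : k ≠ 0)
    (hkn : |k| < (denomSeq α (m+1) : ℤ) + (denomSeq α m : ℤ)) :
    eta α (m+2) ≤ |(k:ℝ) * Int.fract α - p| := by
  obtain ⟨X, Y, hXY0, hkX, hv, hsgn, hY0⟩ := master_core hirr m k p hk hkn
  have hE2 := eta_pos hirr (m+2)
  have hE1 := eta_pos hirr (m+1)
  have hE21 := eta_succ_lt hirr (m+1)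
  rw [hv]
  rcases lt_trichotomy Y 0 with hY | hY | hY
  · -- Y ≤ -1, X ≤ 0
    have hX : X ≤ 0 := by nlinarith
    have hXr : (X:ℝ) ≤ 0 := by exact_mod_cast hX
    have hYr : (Y:ℝ) ≤ -1 := (by exact_mod_cast (show _ ≤ (-1:ℤ) by omega))
    have : eta α (m+2) ≤ -((X:ℝ) * eta α (m+2) + Y * eta α (m+1)) := by nlinarith
    exact le_trans this (neg_le_abs _)
  · rcases hY0 hY with h | h
    · have hv2 : (X:ℝ) * eta α (m+2) + Y * eta α (m+1) = eta α (m+2) := by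
        rw [h, hY]; push_cast; ring
      rw [hv2, abs_of_pos hE2]
    · have hv2 : (X:ℝ) * eta α (m+2) + Y * eta α (m+1) = -eta α (m+2) := by
        rw [h, hY]; push_cast; ring
      rw [hv2, abs_neg, abs_of_pos hE2]
  · have hX : 0 ≤ X := by nlinarith
    have hXr : (0:ℝ) ≤ (X:ℝ) := by exact_mod_cast hX
    have hYr : (1:ℝ) ≤ (Y:ℝ) := (by exact_mod_cast (show (1:ℤ) ≤ _ by omega))
    have : eta α (m+2) ≤ (X:ℝ) * eta α (m+2) + Y * eta α (m+1) := by nlinarith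
    exact le_trans this (le_abs_self _)

lemma master_mid (m : ℕ) (k p : ℤ) (hk : k ≠ 0)
    (hkn : |k| < (denomSeq α (m+1) : ℤ) + (denomSeq α m : ℤ))
    (h0 : 0 < (k:ℝ) * Int.fract α - p)
    (h1 : (k:ℝ) * Int.fract α - p < eta α (m+1)) :
    ((k:ℝ) * Int.fract α - p = eta α (m+2)) ∧ k = (-1)^(m+1) * (denomSeq α (m+1) : ℤ) := by
  obtain ⟨X, Y, hXY0, hkX, hv, hsgn, hY0⟩ := master_core hirr m k p hk hkn
  have hE2 := eta_pos hirr (m+2)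
  have hE1 := eta_pos hirr (m+1)
  have hE21 := eta_succ_lt hirr (m+1)
  rw [hv] at h0 h1
  have hYz : Y = 0 := by
    rcases lt_trichotomy Y 0 with hY | hY | hY
    · exfalso
      have hX : X ≤ 0 := by nlinarith
      have hXr : (X:ℝ) ≤ 0 := by exact_mod_cast hX
      have hYr : (Y:ℝ) ≤ -1 := (by exact_mod_cast (show _ ≤ (-1:ℤ) by omega))
      nlinarith
    · exact hY
    · exfalso
      have hX : 0 ≤ X := by nlinarith
      have hXr : (0:ℝ) ≤ (X:ℝ) := by exact_mod_cast hX
      have hYr : (1:ℝ) ≤ (Y:ℝ) := (by exact_mod_cast (show (1:ℤ) ≤ _ by omega))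
      nlinarith
  rcases hY0 hYz with h | h
  · constructor
    · rw [hv, h, hYz]; push_cast; ring
    · rw [hkX, h, hYz]; ring
  · exfalso
    rw [h, hYz] at h0
    push_cast at h0
    nlinarith

lemma master_eq (m : ℕ) (k p : ℤ) (hk : k ≠ 0)
    (hkn : |k| < (denomSeq α (m+1) : ℤ) + (denomSeq α m : ℤ))
    (heq : (k:ℝ) * Int.fract α - p = eta α (m+1)) :
    k = (-1)^m * (denomSeq α m : ℤ) := by
  obtain ⟨X, Y, hXY0, hkX, hv, hsgn, hY0⟩ := master_core hirr m k p hk hkn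
  have hE2 := eta_pos hirr (m+2)
  have hE1 := eta_pos hirr (m+1)
  have hE21 := eta_succ_lt hirr (m+1)
  rw [hv] at heq
  have hY1 : Y = 1 := by
    rcases lt_trichotomy Y 0 with hY | hY | hY
    · exfalso
      have hX : X ≤ 0 := by nlinarith
      have hXr : (X:ℝ) ≤ 0 := by exact_mod_cast hX
      have hYr : (Y:ℝ) ≤ -1 := (by exact_mod_cast (show _ ≤ (-1:ℤ) by omega))
      nlinarith
    · exfalso
      rcases hY0 hY with h | h <;> rw [h, hY] at heq <;> push_cast at heq <;> nlinarith
    · by_contra hne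
      have hY2 : 2 ≤ Y := by omega
      have hX : 0 ≤ X := by nlinarith
      have hXr : (0:ℝ) ≤ (X:ℝ) := by exact_mod_cast hX
      have hYr : (2:ℝ) ≤ (Y:ℝ) := by exact_mod_cast hY2
      nlinarith
  have hX0 : X = 0 := by
    rw [hY1] at heq
    push_cast at heq
    have hX : 0 ≤ X := by nlinarith
    rcases hX.lt_or_eq with h | h
    · exfalso
      have hXr : (1:ℝ) ≤ (X:ℝ) := (by exact_mod_cast (show (1:ℤ) ≤ _ by omega))
      nlinarith
    · omega
  rw [hkX, hX0, hY1, pow_succ]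
  ring


lemma beta_irr : Irrational (Int.fract α) := irr_fract hirr

lemma kmul_irr {k : ℤ} (hk : k ≠ 0) : Irrational ((k:ℝ) * Int.fract α) :=
  (beta_irr hirr).intCast_mul hk

lemma fract_kmul_pos {k : ℤ} (hk : k ≠ 0) : 0 < Int.fract ((k:ℝ) * Int.fract α) :=
  irr_pos (irr_fract (kmul_irr hirr hk)) (Int.fract_nonneg _)

lemma fract_lower (m : ℕ) (k : ℤ) (hk : k ≠ 0)
    (hkn : |k| < (denomSeq α (m+1) : ℤ) + (denomSeq α m : ℤ)) :
    eta α (m+2) ≤ Int.fract ((k:ℝ) * Int.fract α) := by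
  have h := master_lower hirr m k ⌊(k:ℝ) * Int.fract α⌋ hk hkn
  rw [Int.self_sub_floor, abs_of_nonneg (Int.fract_nonneg _)] at h
  exact h

lemma fract_mid (m : ℕ) (k : ℤ) (hk : k ≠ 0)
    (hkn : |k| < (denomSeq α (m+1) : ℤ) + (denomSeq α m : ℤ))
    (h1 : Int.fract ((k:ℝ) * Int.fract α) < eta α (m+1)) :
    Int.fract ((k:ℝ) * Int.fract α) = eta α (m+2)
      ∧ k = (-1)^(m+1) * (denomSeq α (m+1) : ℤ) := by
  have h := master_mid hirr m k ⌊(k:ℝ) * Int.fract α⌋ hk hkn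
  rw [Int.self_sub_floor] at h
  exact h (fract_kmul_pos hirr hk) h1

lemma fract_eq_eta (m : ℕ) (k : ℤ) (hk : k ≠ 0)
    (hkn : |k| < (denomSeq α (m+1) : ℤ) + (denomSeq α m : ℤ))
    (heq : Int.fract ((k:ℝ) * Int.fract α) = eta α (m+1)) :
    k = (-1)^m * (denomSeq α m : ℤ) := by
  have h := master_eq hirr m k ⌊(k:ℝ) * Int.fract α⌋ hk hkn
  rw [Int.self_sub_floor] at h
  exact h heq

lemma fract_val_q1 (m : ℕ) :
    Int.fract ((((-1:ℤ)^(m+1) * (denomSeq α (m+1) : ℤ) : ℤ) : ℝ) * Int.fract α)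
      = eta α (m+2) := by
  have hkl := key_lin hirr (m+1)
  have hval : (((((-1:ℤ)^(m+1) * (denomSeq α (m+1) : ℤ) : ℤ)) : ℝ) * Int.fract α)
      = eta α (m+2) + ((((-1:ℤ)^(m+1) * (pNum α (m+1) : ℤ) : ℤ)) : ℝ) := by
    push_cast
    have h2r : ((-1:ℝ)^(m+1)) * ((-1:ℝ)^(m+1)) = 1 := by
      rw [← pow_add]; exact Even.neg_one_pow ⟨m+1, by ring⟩
    linear_combination ((-1:ℝ)^(m+1)) * hkl + eta α (m+2) * h2r
  rw [hval, Int.fract_add_intCast, Int.fract_eq_self.mpr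
    ⟨(eta_pos hirr (m+2)).le, eta_lt_one hirr (m+1)⟩]

lemma fract_val_q0 (m : ℕ) :
    Int.fract ((((-1:ℤ)^m * (denomSeq α m : ℤ) : ℤ) : ℝ) * Int.fract α)
      = eta α (m+1) := by
  have hkl := key_lin hirr m
  have hval : (((((-1:ℤ)^m * (denomSeq α m : ℤ) : ℤ)) : ℝ) * Int.fract α)
      = eta α (m+1) + ((((-1:ℤ)^m * (pNum α m : ℤ) : ℤ)) : ℝ) := by
    push_cast
    have h2r : ((-1:ℝ)^m) * ((-1:ℝ)^m) = 1 := by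
      rw [← pow_add]; exact Even.neg_one_pow ⟨m, rfl⟩
    linear_combination ((-1:ℝ)^m) * hkl + eta α (m+1) * h2r
  rw [hval, Int.fract_add_intCast, Int.fract_eq_self.mpr
    ⟨(eta_pos hirr (m+1)).le, eta_lt_one hirr m⟩]


omit hirr in
lemma fract_sub_fract (x y : ℝ) (h : 0 < Int.fract x - Int.fract y) :
    Int.fract (x - y) = Int.fract x - Int.fract y := by
  have hxy : x - y = (Int.fract x - Int.fract y) + ((⌊x⌋ - ⌊y⌋ : ℤ) : ℝ) := by
    rw [Int.fract, Int.fract]; push_cast; ring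
  rw [hxy, Int.fract_add_intCast, Int.fract_eq_self.mpr]
  constructor
  · exact h.le
  · have h1 := Int.fract_lt_one x
    have h2 := Int.fract_nonneg y
    linarith

omit hirr in
lemma fract_add_fract (x y : ℝ) :
    Int.fract (x + y) = Int.fract (Int.fract x + Int.fract y) := by
  have hxy : x + y = (Int.fract x + Int.fract y) + ((⌊x⌋ + ⌊y⌋ : ℤ) : ℝ) := by
    rw [Int.fract, Int.fract]; push_cast; ring
  rw [hxy, Int.fract_add_intCast]

omit hirr in
lemma kron_fract (u : ℕ) : kron α u = Int.fract ((u:ℝ) * Int.fract α) := by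
  show Int.fract ((u:ℝ) * α) = _
  have h : (u:ℝ) * α = (u:ℝ) * Int.fract α + ((u * ⌊α⌋ : ℤ) : ℝ) := by
    rw [Int.fract]; push_cast; ring
  rw [h, Int.fract_add_intCast]

lemma kron_injective : Function.Injective (kron α) := by
  intro u w h
  by_contra hne
  have hk : ((u:ℤ) - w) ≠ 0 := by
    intro h0
    exact hne (by exact_mod_cast (show (u:ℤ) = w by omega))
  have hirr2 : Irrational ((((u:ℤ) - w : ℤ)):ℝ) → False := fun hI => hI.ne_int _ rfl
  apply hirr2
  have heq : ((((u:ℤ) - w : ℤ)):ℝ) * Int.fract α = ((⌊(u:ℝ) * Int.fract α⌋ - ⌊(w:ℝ) * Int.fract α⌋ : ℤ) : ℝ) := by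
    have h2 : (u:ℝ) * Int.fract α - ⌊(u:ℝ) * Int.fract α⌋
        = (w:ℝ) * Int.fract α - ⌊(w:ℝ) * Int.fract α⌋ := by
      rw [Int.self_sub_floor, Int.self_sub_floor]
      rw [kron_fract u, kron_fract w] at h
      exact h
    push_cast
    linarith
  have := (kmul_irr hirr hk)
  rw [heq] at this
  exact absurd rfl (this.ne_int _)

/-- the next point of `S` after `t`, or `1` if there is none -/
noncomputable def nxtOr1 (S : Finset ℝ) (t : ℝ) : ℝ :=
  if h : (S.filter (fun x => t < x)).Nonempty then (S.filter (fun x => t < x)).min' h else 1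

omit hirr in
lemma sorted_getElem_le {l : List ℝ} (h : l.Pairwise (· < ·)) {i j : ℕ}
    (hi : i < l.length) (hj : j < l.length) (hij : i ≤ j) : l[i] ≤ l[j] := by
  rcases hij.lt_or_eq with h' | h'
  · exact (List.pairwise_iff_getElem.mp h i j hi hj h').le
  · subst h'; rfl

omit hirr in
lemma zip_eq_map_nxt (S : Finset ℝ) :
    List.zipWith (fun a b => b - a) (S.sort (· ≤ ·)) ((S.sort (· ≤ ·)).tail ++ [1])
      = (S.sort (· ≤ ·)).map (fun t => nxtOr1 S t - t) := by
  set L := S.sort (· ≤ ·) with hL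
  have hsorted : L.Pairwise (· < ·) := (Finset.sortedLT_sort S).pairwise
  have hmemS : ∀ x ∈ L, x ∈ S := fun x hx => (Finset.mem_sort _).mp hx
  have hnext : ∀ (i : ℕ) (h1 : i < (L.tail ++ [1]).length) (h2 : i < L.length),
      (L.tail ++ [1])[i] = nxtOr1 S (L[i]) := by
    intro i h1 h2
    by_cases hi : i + 1 < L.length
    · have hlt : i < L.tail.length := by rw [List.length_tail]; omega
      rw [List.getElem_append_left hlt, List.getElem_tail]
      have hne : (S.filter (fun x => L[i] < x)).Nonempty := by
        refine ⟨L[i+1], Finset.mem_filter.mpr ⟨hmemS _ (List.getElem_mem hi), ?_⟩⟩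
        exact List.pairwise_iff_getElem.mp hsorted i (i+1) h2 hi (by
          simp [Fin.lt_def])
      rw [nxtOr1, dif_pos hne]
      apply le_antisymm
      · apply Finset.le_min'
        intro x hx
        obtain ⟨hxS, hxgt⟩ := Finset.mem_filter.mp hx
        have hxL : x ∈ L := (Finset.mem_sort _).mpr hxS
        obtain ⟨j, hj, hjx⟩ := List.mem_iff_getElem.mp hxL
        rcases le_or_gt (i+1) j with hij | hij
        · rw [← hjx]; exact sorted_getElem_le hsorted hi hj hij
        · exfalso
          have : x ≤ L[i] := by
            rw [← hjx]; exact sorted_getElem_le hsorted hj h2 (by omega)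
          linarith
      · exact Finset.min'_le _ _ (Finset.mem_filter.mpr
          ⟨hmemS _ (List.getElem_mem hi),
           List.pairwise_iff_getElem.mp hsorted i (i+1) h2 hi (by simp [Fin.lt_def])⟩)
    · -- i = L.length - 1
      have hlen : L.tail.length = L.length - 1 := List.length_tail (l := L)
      have hi' : L.tail.length ≤ i := by omega
      rw [List.getElem_append_right hi']
      have : (L.tail ++ [1]).length = L.length := by
        rw [List.length_append, hlen]; simp; omega
      have hemp : ¬ (S.filter (fun x => L[i] < x)).Nonempty := by
        rintro ⟨x, hx⟩
        obtain ⟨hxS, hxgt⟩ := Finset.mem_filter.mp hx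
        have hxL : x ∈ L := (Finset.mem_sort _).mpr hxS
        obtain ⟨j, hj, hjx⟩ := List.mem_iff_getElem.mp hxL
        have : x ≤ L[i] := by
          rw [← hjx]; exact sorted_getElem_le hsorted hj h2 (by omega)
        linarith
      rw [nxtOr1, dif_neg hemp]
      simp
  apply List.ext_getElem
  · rw [List.length_zipWith, List.length_map, List.length_append, List.length_tail]
    simp
    omega
  · intro i h1 h2
    rw [List.getElem_zipWith, List.getElem_map]
    rw [hnext i (by rw [List.length_append, List.length_tail] at *; simp at *; omega)
      (by rw [List.length_zipWith] at h1; omega)]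


/-- index shift giving gap `η_m` -/
noncomputable def kOne (α : ℝ) (M : ℕ) : ℤ := (-1)^(M+1) * (denomSeq α (M+1) : ℤ)
/-- index shift giving gap `η_{m-1}` -/
noncomputable def kTwo (α : ℝ) (M : ℕ) : ℤ := (-1)^M * (denomSeq α M : ℤ)

/-- condition for the gap after point `u` to be the small gap -/
def Acond (α : ℝ) (M : ℕ) (u : ℕ) : Prop :=
  0 ≤ (u:ℤ) + kOne α M ∧ (u:ℤ) + kOne α M < (denomSeq α (M+1) : ℤ) + (denomSeq α M : ℤ)

noncomputable instance Acond.dec (α : ℝ) (M : ℕ) : DecidablePred (Acond α M) :=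
  fun _ => instDecidableAnd

noncomputable def gapVal (α : ℝ) (M : ℕ) (u : ℕ) : ℝ :=
  if Acond α M u then eta α (M+2) else eta α (M+1)

omit hirr in
lemma kparity (M : ℕ) :
    (kOne α M = -(denomSeq α (M+1) : ℤ) ∧ kTwo α M = (denomSeq α M : ℤ))
    ∨ (kOne α M = (denomSeq α (M+1) : ℤ) ∧ kTwo α M = -(denomSeq α M : ℤ)) := by
  rcases Nat.even_or_odd M with h | h
  · left
    constructor
    · rw [kOne, pow_succ, Even.neg_one_pow h]; ring
    · rw [kTwo, Even.neg_one_pow h]; ring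
  · right
    constructor
    · rw [kOne, pow_succ, Odd.neg_one_pow h]; ring
    · rw [kTwo, Odd.neg_one_pow h]; ring

lemma nxt_kron (M u : ℕ) (hu : u < denomSeq α (M+1) + denomSeq α M) :
    nxtOr1 ((Finset.range (denomSeq α (M+1) + denomSeq α M)).image (kron α)) (kron α u)
      = kron α u + gapVal α M u := by
  classical
  set n : ℕ := denomSeq α (M+1) + denomSeq α M with hn
  set S : Finset ℝ := (Finset.range n).image (kron α) with hS
  set t : ℝ := kron α u with ht
  set k : ℤ := if Acond α M u then kOne α M else kTwo α M with hk
  set η : ℝ := gapVal α M u with hη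
  have hQ1 : 1 ≤ denomSeq α (M+1) := denom_pos hirr (M+1)
  have hQ0 : 1 ≤ denomSeq α M := denom_pos hirr M
  have hE2pos := eta_pos hirr (M+2)
  have hE1pos := eta_pos hirr (M+1)
  have hE21 := eta_succ_lt hirr (M+1)
  have hE1lt1 := eta_lt_one hirr M
  have hE2lt1 := eta_lt_one hirr (M+1)
  have hηpos : 0 < η := by
    rw [hη, gapVal]; split <;> assumption
  have hηlt1 : η < 1 := by
    rw [hη, gapVal]; split <;> assumption
  have hηle : η ≤ eta α (M+1) := by
    rw [hη, gapVal]; split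
    · exact hE21.le
    · exact le_refl _
  have hk0 : k ≠ 0 := by
    rw [hk]; rcases kparity (α := α) M with ⟨h1, h2⟩ | ⟨h1, h2⟩ <;> split <;>
      simp_all <;> omega
  have hkabs : |k| < (denomSeq α (M+1) : ℤ) + (denomSeq α M : ℤ) := by
    rw [hk]; rcases kparity (α := α) M with ⟨h1, h2⟩ | ⟨h1, h2⟩ <;> split <;>
      simp_all <;> omega
  have hfk : Int.fract ((k:ℝ) * Int.fract α) = η := by
    rw [hk, hη, gapVal]
    split
    · exact fract_val_q1 hirr M
    · exact fract_val_q0 hirr M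
  have hrange : 0 ≤ (u:ℤ) + k ∧ (u:ℤ) + k < (n:ℤ) := by
    rw [hk]
    by_cases hA : Acond α M u
    · rw [if_pos hA]
      exact ⟨hA.1, by push_cast [hn]; exact_mod_cast hA.2⟩
    · rw [if_neg hA]
      rw [Acond] at hA
      push_neg at hA
      have hucast : (u:ℤ) < (denomSeq α (M+1) : ℤ) + (denomSeq α M : ℤ) := by
        exact_mod_cast hu
      push_cast [hn]
      rcases kparity (α := α) M with ⟨h1, h2⟩ | ⟨h1, h2⟩ <;> rw [h1] at hA <;> rw [h2] <;>
        omega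
  -- membership criterion
  have hmem : ∀ x, x ∈ S ↔ ∃ w, w < n ∧ kron α w = x := by
    intro x
    rw [hS, Finset.mem_image]
    constructor
    · rintro ⟨w, hw, rfl⟩; exact ⟨w, Finset.mem_range.mp hw, rfl⟩
    · rintro ⟨w, hw, rfl⟩; exact ⟨w, Finset.mem_range.mpr hw, rfl⟩
  -- difference of two kron points
  have hdiff : ∀ w : ℕ, kron α u < kron α w →
      kron α w - kron α u = Int.fract ((((w:ℤ) - (u:ℤ) : ℤ) : ℝ) * Int.fract α) := by
    intro w hlt
    rw [kron_fract w, kron_fract u] at hlt ⊢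
    have h := fract_sub_fract ((w:ℝ) * Int.fract α) ((u:ℝ) * Int.fract α) (by linarith)
    have hc : (w:ℝ) * Int.fract α - (u:ℝ) * Int.fract α
        = (((w:ℤ) - (u:ℤ) : ℤ) : ℝ) * Int.fract α := by push_cast; ring
    rw [hc] at h
    rw [← h]
  -- no point of S strictly between t and t + η
  have hno : ∀ w : ℕ, w < n → t < kron α w → kron α w < t + η → False := by
    intro w hw hlt hlt2
    have hku : ((w:ℤ) - (u:ℤ)) ≠ 0 := by
      intro h0
      have : w = u := by omega
      rw [this] at hlt; exact lt_irrefl _ hlt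
    have habs : |(w:ℤ) - (u:ℤ)| < (denomSeq α (M+1) : ℤ) + (denomSeq α M : ℤ) := by
      have h1 : (w:ℤ) < (n:ℤ) := by exact_mod_cast hw
      have h2 : (u:ℤ) < (n:ℤ) := by exact_mod_cast hu
      have h3 : ((n:ℕ):ℤ) = (denomSeq α (M+1) : ℤ) + (denomSeq α M : ℤ) := by push_cast [hn]; ring
      rw [abs_lt]; omega
    have hfr := hdiff w hlt
    by_cases hA : Acond α M u
    · have hηe : η = eta α (M+2) := by rw [hη, gapVal, if_pos hA]
      have := fract_lower hirr M ((w:ℤ) - (u:ℤ)) hku habs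
      rw [← hfr] at this
      rw [hηe] at hlt2
      linarith
    · have hηe : η = eta α (M+1) := by rw [hη, gapVal, if_neg hA]
      have hsm : Int.fract ((((w:ℤ) - (u:ℤ) : ℤ) : ℝ) * Int.fract α) < eta α (M+1) := by
        rw [← hfr, ← hηe]; linarith
      obtain ⟨_, hkeq⟩ := fract_mid hirr M ((w:ℤ) - (u:ℤ)) hku habs hsm
      apply hA
      constructor
      · rw [← kOne] at hkeq
        omega
      · rw [← kOne] at hkeq
        have h1 : (w:ℤ) < (n:ℤ) := by exact_mod_cast hw
        have h3 : ((n:ℕ):ℤ) = (denomSeq α (M+1) : ℤ) + (denomSeq α M : ℤ) := by push_cast [hn]; ring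
        omega
  -- upper bound : t + η ≤ 1
  have hub : t + η ≤ 1 := by
    by_contra hgt
    push_neg at hgt
    have hu0 : u ≠ 0 := by
      intro h0
      rw [ht, h0] at hgt
      have : kron α 0 = 0 := by
        show Int.fract (((0:ℕ):ℝ) * α) = 0
        norm_num
      rw [this] at hgt
      linarith
    have huZ : ((u:ℤ)) ≠ 0 := by exact_mod_cast hu0
    have hfp : Int.fract ((u:ℝ) * Int.fract α) ≠ 0 := by
      have := fract_kmul_pos hirr (k := (u:ℤ)) huZ
      push_cast at this
      linarith
    have hneg : Int.fract (((-(u:ℤ) : ℤ):ℝ) * Int.fract α) = 1 - t := by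
      have h1 : ((-(u:ℤ) : ℤ):ℝ) * Int.fract α = -((u:ℝ) * Int.fract α) := by push_cast; ring
      rw [h1, Int.fract_neg hfp, ht, kron_fract]
    have habs : |(-(u:ℤ) : ℤ)| < (denomSeq α (M+1) : ℤ) + (denomSeq α M : ℤ) := by
      have h2 : (u:ℤ) < (n:ℤ) := by exact_mod_cast hu
      have h3 : ((n:ℕ):ℤ) = (denomSeq α (M+1) : ℤ) + (denomSeq α M : ℤ) := by push_cast [hn]; ring
      rw [abs_lt]; omega
    have hlt : Int.fract (((-(u:ℤ) : ℤ):ℝ) * Int.fract α) < eta α (M+1) := by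
      rw [hneg]; linarith [hηle]
    obtain ⟨hval, hkeq⟩ := fract_mid hirr M (-(u:ℤ)) (by omega) habs hlt
    rw [← kOne] at hkeq
    have hA : Acond α M u := by
      constructor
      · omega
      · have h2 : (0:ℤ) < (denomSeq α (M+1) : ℤ) + (denomSeq α M : ℤ) := by positivity
        omega
    have hηe : η = eta α (M+2) := by rw [hη, gapVal, if_pos hA]
    rw [hneg] at hval
    rw [hηe] at hgt
    linarith
  -- now compute nxtOr1
  have ht0 : 0 ≤ t := by rw [ht, kron_fract]; exact Int.fract_nonneg _
  rcases hrange.1.lt_or_eq with hpos | hzero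
  · -- u + k > 0 : successor is a genuine point of S
    set w : ℕ := ((u:ℤ) + k).toNat with hw
    have hwZ : ((w:ℕ):ℤ) = (u:ℤ) + k := Int.toNat_of_nonneg hrange.1
    have hwn : w < n := by
      have h2 : (u:ℤ) + k < (n:ℤ) := hrange.2
      omega
    have hc : (w:ℝ) * Int.fract α = (u:ℝ) * Int.fract α + (k:ℝ) * Int.fract α := by
      have := congrArg (Int.cast : ℤ → ℝ) hwZ
      push_cast at this
      rw [this]; ring
    have hslt : t + η < 1 := by
      rcases hub.lt_or_eq with h | h
      · exact h
      · exfalso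
        have hs0 : kron α w = 0 := by
          rw [kron_fract, hc, fract_add_fract, hfk, ← kron_fract u, ← ht, h]
          exact Int.fract_one
        have h00 : kron α 0 = 0 := by
          show Int.fract (((0:ℕ):ℝ) * α) = 0
          norm_num
        have hw0 : w = 0 := kron_injective hirr (by rw [hs0, h00])
        have : (u:ℤ) + k = 0 := by omega
        omega
    have hs : kron α w = t + η := by
      rw [kron_fract, hc, fract_add_fract, hfk, ← kron_fract u, ← ht]
      exact Int.fract_eq_self.mpr ⟨by linarith, hslt⟩
    have hsS : kron α w ∈ S := (hmem _).mpr ⟨w, hwn, rfl⟩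
    have hne : (S.filter (fun x => t < x)).Nonempty :=
      ⟨kron α w, Finset.mem_filter.mpr ⟨hsS, by rw [hs]; linarith⟩⟩
    rw [nxtOr1, dif_pos hne]
    apply le_antisymm
    · apply Finset.min'_le
      exact Finset.mem_filter.mpr ⟨by rw [hs] at hsS; exact hsS, by linarith⟩
    · apply Finset.le_min'
      intro x hx
      obtain ⟨hxS, hxgt⟩ := Finset.mem_filter.mp hx
      obtain ⟨w', hw', rfl⟩ := (hmem x).mp hxS
      by_contra hlt
      push_neg at hlt
      exact hno w' hw' hxgt hlt
  · -- u + k = 0 : t is the maximum, gap runs to 1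
    have hu0 : (u:ℤ) = -k := by omega
    have huZ : (u:ℤ) ≠ 0 := by
      intro h
      apply hk0
      omega
    have hfp : Int.fract ((u:ℝ) * Int.fract α) ≠ 0 := by
      have := fract_kmul_pos hirr (k := (u:ℤ)) huZ
      push_cast at this
      linarith
    have hteq : t + η = 1 := by
      have h1 : (k:ℝ) * Int.fract α = -((u:ℝ) * Int.fract α) := by
        have h2 : ((k:ℤ):ℝ) = -((u:ℤ):ℝ) := by
          exact_mod_cast congrArg (Int.cast : ℤ → ℝ) (by omega : k = -(u:ℤ))
        push_cast at h2 ⊢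
        rw [h2]; ring
      rw [← hfk, h1, Int.fract_neg hfp, ht, kron_fract]
      ring
    have hemp : ¬ (S.filter (fun x => t < x)).Nonempty := by
      rintro ⟨x, hx⟩
      obtain ⟨hxS, hxgt⟩ := Finset.mem_filter.mp hx
      obtain ⟨w', hw', rfl⟩ := (hmem x).mp hxS
      have hxlt1 : kron α w' < 1 := by rw [kron_fract]; exact Int.fract_lt_one _
      exact hno w' hw' hxgt (by linarith [hteq])
    rw [nxtOr1, dif_neg hemp]
    linarith [hteq]


omit hirr in
lemma count_map_sort (S : Finset ℝ) (f : ℝ → ℝ) (v : ℝ) :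
    ((S.sort (· ≤ ·)).map f).count v = (S.filter (fun t => f t = v)).card := by
  classical
  rw [List.count_eq_countP, List.countP_map]
  rw [(Finset.sort_perm_toList S (· ≤ ·)).countP_eq]
  have h1 : List.countP ((fun x => x == v) ∘ f) S.toList
      = Multiset.countP (fun t => f t = v) (S.val) := by
    rw [← Multiset.coe_toList S.val]
    rw [Multiset.coe_countP]
    show _ = List.countP _ S.toList
    apply List.countP_congr
    intro a _
    simp [Function.comp]
  rw [h1, Multiset.countP_eq_card_filter]
  rw [Finset.card, Finset.filter_val]

lemma count_gaps (M : ℕ) (v : ℝ) :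
    (kronGaps α (denomSeq α (M+1) + denomSeq α M)).count v
      = ((Finset.range (denomSeq α (M+1) + denomSeq α M)).filter
          (fun u => gapVal α M u = v)).card := by
  classical
  set n : ℕ := denomSeq α (M+1) + denomSeq α M with hn
  set S : Finset ℝ := (Finset.range n).image (kron α) with hS
  have h0 : kronGaps α n = (S.sort (· ≤ ·)).map (fun t => nxtOr1 S t - t) :=
    zip_eq_map_nxt S
  rw [h0, count_map_sort]
  rw [hS, Finset.filter_image]
  rw [Finset.card_image_of_injOn (Function.Injective.injOn (kron_injective hirr))]
  congr 1
  apply Finset.filter_congr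
  intro u hu
  rw [Finset.mem_range] at hu
  rw [← hS, nxt_kron hirr M u hu]
  simp

lemma card_Acond (M : ℕ) :
    ((Finset.range (denomSeq α (M+1) + denomSeq α M)).filter
      (fun u => Acond α M u)).card = denomSeq α M := by
  classical
  set Q1 := denomSeq α (M+1) with hQ1d
  set Q0 := denomSeq α M with hQ0d
  have hr : ∀ c : ℕ, c ≤ Q1 + Q0 →
      ((Finset.range (Q1 + Q0)).filter (fun u => u < c)).card = c := by
    intro c hc
    have : (Finset.range (Q1 + Q0)).filter (fun u => u < c) = Finset.range c := by
      ext x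
      simp only [Finset.mem_filter, Finset.mem_range]
      omega
    rw [this, Finset.card_range]
  rcases kparity (α := α) M with ⟨h1, _⟩ | ⟨h1, _⟩
  · -- kOne = -Q1 : Acond u ↔ ¬ (u < Q1)
    have heq : (Finset.range (Q1 + Q0)).filter (fun u => Acond α M u)
        = (Finset.range (Q1 + Q0)).filter (fun u => ¬ (u < Q1)) := by
      apply Finset.filter_congr
      intro x hx
      rw [Finset.mem_range] at hx
      simp only [Acond, h1]
      constructor
      · intro ⟨ha, _⟩ hlt
        omega
      · intro hge
        omega
    rw [heq]
    have := Finset.card_filter_add_card_filter_not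
      (s := Finset.range (Q1 + Q0)) (p := fun u => u < Q1)
    rw [hr Q1 (by omega)] at this
    rw [Finset.card_range] at this
    omega
  · -- kOne = Q1 : Acond u ↔ u < Q0
    have heq : (Finset.range (Q1 + Q0)).filter (fun u => Acond α M u)
        = (Finset.range (Q1 + Q0)).filter (fun u => u < Q0) := by
      apply Finset.filter_congr
      intro x hx
      rw [Finset.mem_range] at hx
      simp only [Acond, h1]
      constructor
      · intro ⟨_, ha⟩
        omega
      · intro hlt
        omega
    rw [heq, hr Q0 (by omega)]

lemma card_notAcond (M : ℕ) :
    ((Finset.range (denomSeq α (M+1) + denomSeq α M)).filter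
      (fun u => ¬ Acond α M u)).card = denomSeq α (M+1) := by
  classical
  have h1 := card_Acond hirr M
  have h2 := Finset.card_filter_add_card_filter_not
    (s := Finset.range (denomSeq α (M+1) + denomSeq α M)) (p := fun u => Acond α M u)
  rw [Finset.card_range, h1] at h2
  omega

end ThreeGapAux

/-- Three-gap structure at `n = n_m`, `m ≥ 1`: among the `n` consecutive gap
lengths (including the wrap-around gap to `1`), exactly `s_{m-1}` equal `η_m`
and exactly `s_m` equal `η_{m-1}`. -/
theorem kronGaps_count_at_nSeq (α : ℝ) (hpos : 0 < α) (hirr : Irrational α)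
    (m : ℕ) (hm : 1 ≤ m) :
    (kronGaps α (nSeq α m)).count (eta α (m + 1)) = denomSeq α (m - 1) ∧
      (kronGaps α (nSeq α m)).count (eta α m) = denomSeq α m := by
  classical
  obtain ⟨M, rfl⟩ : ∃ M, m = M + 1 := ⟨m - 1, by omega⟩
  have hnn : nSeq α (M+1) = denomSeq α (M+1) + denomSeq α M := rfl
  have hE21 := ThreeGapAux.eta_succ_lt hirr (M+1)
  constructor
  · show (kronGaps α (nSeq α (M+1))).count (eta α (M + 2)) = denomSeq α M
    rw [hnn, ThreeGapAux.count_gaps hirr M (eta α (M+2))]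
    rw [show ((Finset.range (denomSeq α (M+1) + denomSeq α M)).filter
          (fun u => ThreeGapAux.gapVal α M u = eta α (M+2)))
        = ((Finset.range (denomSeq α (M+1) + denomSeq α M)).filter
          (fun u => ThreeGapAux.Acond α M u)) from ?_]
    · exact ThreeGapAux.card_Acond hirr M
    · apply Finset.filter_congr
      intro u _
      rw [ThreeGapAux.gapVal]
      split
      · simp_all
      · constructor
        · intro hh
          exact absurd hh (by intro hc; rw [hc] at hE21; linarith)
        · intro hh
          exact absurd hh (by assumption)
  · show (kronGaps α (nSeq α (M+1))).count (eta α (M + 1)) = denomSeq α (M+1)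
    rw [hnn, ThreeGapAux.count_gaps hirr M (eta α (M+1))]
    rw [show ((Finset.range (denomSeq α (M+1) + denomSeq α M)).filter
          (fun u => ThreeGapAux.gapVal α M u = eta α (M+1)))
        = ((Finset.range (denomSeq α (M+1) + denomSeq α M)).filter
          (fun u => ¬ ThreeGapAux.Acond α M u)) from ?_]
    · exact ThreeGapAux.card_notAcond hirr M
    · apply Finset.filter_congr
      intro u _
      rw [ThreeGapAux.gapVal]
      split
      · constructor
        · intro hh
          exfalso
          rw [hh] at hE21
          linarith
        · intro hh
          exact absurd (by assumption) hh
      · simp_all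
end

section
/- If α is a badly approximable number (irrational with partial quotients a_j uniformly bounded), then the Kronecker sequence x_i = iα mod 1 is quasi-uniform over [0,1]: for all n ≥ 2, the mesh ratio ρ_n = h_n/q_n satisfies ρ_n ≤ 2 + 2·sup_{j≥1} a_j. -/
open scoped BigOperators

variable {α : ℝ}

lemma irr_fract (h : Irrational α) : Irrational (Int.fract α) := by
  rw [Int.fract]
  exact h.sub_intCast _

lemma irr_one_div {x : ℝ} (h : Irrational x) : Irrational (1 / x) := by
  have hx : x ≠ 0 := h.ne_zero
  rw [one_div]
  exact h.inv

lemma alphaSeq_irr (h : Irrational α) : ∀ m, Irrational (alphaSeq α m)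
  | 0 => irr_fract h
  | m + 1 => irr_fract (irr_one_div (alphaSeq_irr h m))

lemma alphaSeq_pos (h : Irrational α) (m : ℕ) : 0 < alphaSeq α m := by
  have := alphaSeq_irr h m
  cases m with
  | zero =>
    rw [alphaSeq]
    rcases lt_or_eq_of_le (Int.fract_nonneg α) with h1 | h1
    · exact h1
    · exfalso
      have h2 := irr_fract h
      rw [← h1] at h2
      exact not_irrational_zero h2
  | succ n =>
    rw [alphaSeq]
    rcases lt_or_eq_of_le (Int.fract_nonneg (1 / alphaSeq α n)) with h1 | h1
    · exact h1
    · exfalso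
      have : Irrational (Int.fract (1 / alphaSeq α n)) :=
        irr_fract (irr_one_div (alphaSeq_irr h n))
      rw [← h1] at this
      exact not_irrational_zero this

lemma alphaSeq_lt_one (m : ℕ) : alphaSeq α m < 1 := by
  cases m <;> exact Int.fract_lt_one _

lemma one_lt_inv_alphaSeq (h : Irrational α) (m : ℕ) : 1 < 1 / alphaSeq α m :=
  by
  rw [lt_div_iff₀ (alphaSeq_pos h m), one_mul]
  exact alphaSeq_lt_one m

lemma partialQuot_cast (h : Irrational α) (m : ℕ) :
    (partialQuot α (m + 1) : ℝ) = (⌊1 / alphaSeq α m⌋ : ℤ) := by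
  rw [partialQuot]
  have h1 : (1:ℝ) ≤ 1 / alphaSeq α m := le_of_lt (one_lt_inv_alphaSeq h m)
  have h2 : (0:ℤ) ≤ ⌊1 / alphaSeq α m⌋ := Int.le_floor.2 (by push_cast; linarith)
  exact_mod_cast congrArg (Int.cast : ℤ → ℝ) (Int.toNat_of_nonneg h2)

lemma partialQuot_pos (h : Irrational α) (m : ℕ) : 1 ≤ partialQuot α (m + 1) := by
  rw [partialQuot]
  have h1 : (1:ℤ) ≤ ⌊1 / alphaSeq α m⌋ := Int.le_floor.2 (by
    exact_mod_cast le_of_lt (one_lt_inv_alphaSeq h m))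
  omega

/-- key: a_{m+1} + α_{m+1} = 1/α_m -/
lemma keyPQ (h : Irrational α) (m : ℕ) :
    (partialQuot α (m + 1) : ℝ) + alphaSeq α (m + 1) = 1 / alphaSeq α m := by
  rw [partialQuot_cast h, alphaSeq, Int.fract]
  ring

noncomputable def numSeq (α : ℝ) : ℕ → ℕ
  | 0 => 0
  | 1 => 1
  | m + 2 => partialQuot α (m + 2) * numSeq α (m + 1) + numSeq α m

noncomputable def numPred (α : ℝ) : ℕ → ℕ
  | 0 => 1
  | m + 1 => numSeq α m

lemma eta_pos (h : Irrational α) : ∀ m, 0 < eta α m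
  | 0 => one_pos
  | m + 1 => mul_pos (eta_pos h m) (alphaSeq_pos h m)

lemma eta_le_one (h : Irrational α) : ∀ m, eta α m ≤ 1
  | 0 => le_refl 1
  | m + 1 => le_trans
      (mul_le_of_le_one_right (le_of_lt (eta_pos h m)) (le_of_lt (alphaSeq_lt_one m)))
      (eta_le_one h m)

lemma eta_anti (h : Irrational α) (m : ℕ) : eta α (m + 1) ≤ eta α m := by
  rw [eta]
  exact mul_le_of_le_one_right (le_of_lt (eta_pos h m)) (le_of_lt (alphaSeq_lt_one m))

/-- η_{m+1} = η_{m-1} - a_{m+1} η_m -/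
lemma etaR (h : Irrational α) (m : ℕ) :
    eta α (m + 2) = eta α m - (partialQuot α (m + 1) : ℝ) * eta α (m + 1) := by
  have hb := alphaSeq_pos h m
  have hk := keyPQ h m
  show eta α (m+1) * alphaSeq α (m+1) = _
  show eta α m * alphaSeq α m * alphaSeq α (m+1) = eta α m - _ * (eta α m * alphaSeq α m)
  have ha : alphaSeq α (m+1) = 1 / alphaSeq α m - (partialQuot α (m + 1) : ℝ) := by
    linarith
  rw [ha]
  field_simp

/-- recursions in denomPred form -/
lemma denomSeq_rec (m : ℕ) :
    denomSeq α (m + 1) = partialQuot α (m + 1) * denomSeq α m + denomPred α m := by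
  cases m with
  | zero => simp [denomSeq, denomPred]
  | succ n => rfl

lemma numSeq_rec (m : ℕ) :
    numSeq α (m + 1) = partialQuot α (m + 1) * numSeq α m + numPred α m := by
  cases m with
  | zero => simp [numSeq, numPred]
  | succ n => rfl

lemma denomSeq_pos (h : Irrational α) : ∀ m, 1 ≤ denomSeq α m
  | 0 => le_refl 1
  | 1 => partialQuot_pos h 0
  | (m+2) => by
      rw [show denomSeq α (m+2) = partialQuot α (m+2) * denomSeq α (m+1) + denomSeq α m from rfl]
      have := denomSeq_pos h m
      omega

lemma denomSeq_mono (h : Irrational α) (m : ℕ) : denomSeq α m ≤ denomSeq α (m + 1) := by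
  rw [denomSeq_rec]
  have h1 := partialQuot_pos h m
  have h2 := denomSeq_pos h m
  nlinarith [Nat.zero_le (denomPred α m)]

lemma denomSeq_ge (h : Irrational α) : ∀ m, m ≤ denomSeq α m
  | 0 => by omega
  | 1 => partialQuot_pos h 0
  | (m+2) => by
      rw [show denomSeq α (m+2) = partialQuot α (m+2) * denomSeq α (m+1) + denomSeq α m from rfl]
      have h1 := partialQuot_pos h (m+1)
      have h2 := denomSeq_ge h (m+1)
      have h3 := denomSeq_pos h m
      nlinarith

/-- L1 and its pred version, proved together -/
lemma L1 (h : Irrational α) (m : ℕ) :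
    (denomSeq α m : ℝ) * Int.fract α - numSeq α m = (-1)^m * eta α (m+1) ∧
    (denomPred α m : ℝ) * Int.fract α - numPred α m = -((-1)^m * eta α m) := by
  induction m with
  | zero =>
    constructor
    · show (↑(denomSeq α 0) : ℝ) * Int.fract α - ↑(numSeq α 0) = (-1)^0 * eta α 1
      rw [show denomSeq α 0 = 1 from rfl, show numSeq α 0 = 0 from rfl,
        show eta α 1 = eta α 0 * alphaSeq α 0 from rfl,
        show eta α 0 = (1:ℝ) from rfl, show alphaSeq α 0 = Int.fract α from rfl]
      push_cast
      ring
    · show (↑(denomPred α 0) : ℝ) * Int.fract α - ↑(numPred α 0) = -((-1)^0 * eta α 0)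
      rw [show denomPred α 0 = 0 from rfl, show numPred α 0 = 1 from rfl,
        show eta α 0 = (1:ℝ) from rfl]
      push_cast
      ring
  | succ n ih =>
    obtain ⟨h1, h2⟩ := ih
    have hrecd : (denomSeq α (n+1) : ℝ) = (partialQuot α (n+1) : ℝ) * denomSeq α n + denomPred α n := by
      rw [denomSeq_rec]; push_cast; ring
    have hrecn : (numSeq α (n+1) : ℝ) = (partialQuot α (n+1) : ℝ) * numSeq α n + numPred α n := by
      rw [numSeq_rec]; push_cast; ring
    have hR := etaR h n
    constructor
    · rw [hrecd, hrecn]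
      have : (partialQuot α (n+1) : ℝ) * denomSeq α n * Int.fract α + denomPred α n * Int.fract α
          - ((partialQuot α (n+1) : ℝ) * numSeq α n + numPred α n)
          = (partialQuot α (n+1) : ℝ) * ((denomSeq α n : ℝ) * Int.fract α - numSeq α n)
            + ((denomPred α n : ℝ) * Int.fract α - numPred α n) := by ring
      rw [show ((partialQuot α (n+1) : ℝ) * denomSeq α n + denomPred α n) * Int.fract α
          - ((partialQuot α (n+1) : ℝ) * numSeq α n + numPred α n)
          = (partialQuot α (n+1) : ℝ) * ((denomSeq α n : ℝ) * Int.fract α - numSeq α n)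
            + ((denomPred α n : ℝ) * Int.fract α - numPred α n) from by ring]
      rw [h1, h2, hR]
      ring
    · show (denomSeq α n : ℝ) * Int.fract α - numSeq α n = _
      rw [h1]
      ring

/-- 1 = s_m η_{m-1} + s_{m-1} η_m -/
lemma F2 (h : Irrational α) : ∀ m,
    (denomSeq α m : ℝ) * eta α m + (denomPred α m : ℝ) * eta α (m+1) = 1 := by
  intro m
  induction m with
  | zero =>
    rw [show denomSeq α 0 = 1 from rfl, show denomPred α 0 = 0 from rfl,
      show eta α 0 = (1:ℝ) from rfl]
    push_cast; ring
  | succ n ih =>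
    have hrecd : (denomSeq α (n+1) : ℝ) = (partialQuot α (n+1) : ℝ) * denomSeq α n + denomPred α n := by
      rw [denomSeq_rec]; push_cast; ring
    have hR := etaR h n
    show (denomSeq α (n+1) : ℝ) * eta α (n+1) + (denomSeq α n : ℝ) * eta α (n+2) = 1
    rw [hrecd, hR]
    have : ((partialQuot α (n+1) : ℝ) * denomSeq α n + denomPred α n) * eta α (n+1)
        + (denomSeq α n : ℝ) * (eta α n - (partialQuot α (n+1) : ℝ) * eta α (n+1))
        = (denomSeq α n : ℝ) * eta α n + (denomPred α n : ℝ) * eta α (n+1) := by ring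
    rw [this, ih]

/-- determinant: p_m s_{m-1} - p_{m-1} s_m = -(-1)^m -/
lemma detE : ∀ m, (numSeq α m : ℤ) * (denomPred α m : ℤ) - (numPred α m : ℤ) * (denomSeq α m : ℤ)
    = -(-1)^m := by
  intro m
  induction m with
  | zero => simp [numSeq, numPred, denomSeq, denomPred]
  | succ n ih =>
    have hrecd : (denomSeq α (n+1) : ℤ) = (partialQuot α (n+1) : ℤ) * denomSeq α n + denomPred α n := by
      rw [denomSeq_rec]; push_cast; ring
    have hrecn : (numSeq α (n+1) : ℤ) = (partialQuot α (n+1) : ℤ) * numSeq α n + numPred α n := by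
      rw [numSeq_rec]; push_cast; ring
    show (numSeq α (n+1) : ℤ) * (denomSeq α n : ℤ) - (numSeq α n : ℤ) * (denomSeq α (n+1) : ℤ) = _
    rw [hrecd, hrecn]
    have : ((partialQuot α (n+1) : ℤ) * numSeq α n + numPred α n) * (denomSeq α n : ℤ)
        - (numSeq α n : ℤ) * ((partialQuot α (n+1) : ℤ) * denomSeq α n + denomPred α n)
        = -((numSeq α n : ℤ) * (denomPred α n : ℤ) - (numPred α n : ℤ) * (denomSeq α n : ℤ)) := by
      ring
    rw [this, ih]
    ring

/-- det in the convenient form: p_{k+1} s_k - p_k s_{k+1} = (-1)^k -/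
lemma detE' (k : ℕ) : (numSeq α (k+1) : ℤ) * (denomSeq α k : ℤ)
    - (numSeq α k : ℤ) * (denomSeq α (k+1) : ℤ) = (-1)^k := by
  have := detE (α := α) (k+1)
  show _ = ((-1):ℤ)^k
  rw [show (numPred α (k+1) : ℤ) = (numSeq α k : ℤ) from rfl,
    show (denomPred α (k+1) : ℤ) = (denomSeq α k : ℤ) from rfl] at this
  rw [this]
  ring


/-- Best approximation: for 1 ≤ j < s_{k+1}, every integer c has |jβ - c| ≥ η_{k+1} -/
lemma bestApprox (h : Irrational α) (k : ℕ) (j : ℕ) (hj1 : 1 ≤ j)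
    (hj2 : j < denomSeq α (k+1)) (c : ℤ) :
    eta α (k+1) ≤ |(j : ℝ) * Int.fract α - c| := by
  have he : (numSeq α (k+1) : ℤ) * (denomSeq α k : ℤ)
      - (numSeq α k : ℤ) * (denomSeq α (k+1) : ℤ) = (-1)^k := detE' k
  have he2 : ((-1:ℤ)^k) * ((-1:ℤ)^k) = 1 := by
    rw [← pow_add, show k + k = 2*k from by ring, pow_mul]; norm_num
  obtain ⟨x, y, hxj, hxc⟩ : ∃ x y : ℤ,
      x * (denomSeq α k : ℤ) + y * (denomSeq α (k+1) : ℤ) = (j : ℤ) ∧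
      x * (numSeq α k : ℤ) + y * (numSeq α (k+1) : ℤ) = c := by
    refine ⟨(-1)^k * ((numSeq α (k+1) : ℤ) * j - (denomSeq α (k+1) : ℤ) * c),
      (-1)^k * ((denomSeq α k : ℤ) * c - (numSeq α k : ℤ) * j), ?_, ?_⟩
    · have : (-1:ℤ)^k * ((numSeq α (k+1) : ℤ) * j - (denomSeq α (k+1) : ℤ) * c) * (denomSeq α k : ℤ)
          + (-1:ℤ)^k * ((denomSeq α k : ℤ) * c - (numSeq α k : ℤ) * j) * (denomSeq α (k+1) : ℤ)
          = (-1:ℤ)^k * ((numSeq α (k+1) : ℤ) * (denomSeq α k : ℤ)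
              - (numSeq α k : ℤ) * (denomSeq α (k+1) : ℤ)) * j := by ring
      rw [this, he, he2, one_mul]
    · have : (-1:ℤ)^k * ((numSeq α (k+1) : ℤ) * j - (denomSeq α (k+1) : ℤ) * c) * (numSeq α k : ℤ)
          + (-1:ℤ)^k * ((denomSeq α k : ℤ) * c - (numSeq α k : ℤ) * j) * (numSeq α (k+1) : ℤ)
          = (-1:ℤ)^k * ((numSeq α (k+1) : ℤ) * (denomSeq α k : ℤ)
              - (numSeq α k : ℤ) * (denomSeq α (k+1) : ℤ)) * c := by ring
      rw [this, he, he2, one_mul]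
  have hq0R : (denomSeq α k : ℝ) * Int.fract α - (numSeq α k : ℝ) = (-1)^k * eta α (k+1) :=
    (L1 h k).1
  have hq1R : (denomSeq α (k+1) : ℝ) * Int.fract α - (numSeq α (k+1) : ℝ)
      = (-1)^(k+1) * eta α (k+2) := (L1 h (k+1)).1
  have key2 : (j : ℝ) * Int.fract α - c
      = (-1)^k * ((x:ℝ) * eta α (k+1) - (y:ℝ) * eta α (k+2)) := by
    have hj' : ((j:ℕ):ℝ) = (x:ℝ) * (denomSeq α k : ℝ) + (y:ℝ) * (denomSeq α (k+1) : ℝ) := by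
      exact_mod_cast congrArg (Int.cast : ℤ → ℝ) hxj.symm
    have hc' : ((c:ℤ):ℝ) = (x:ℝ) * (numSeq α k : ℝ) + (y:ℝ) * (numSeq α (k+1) : ℝ) := by
      exact_mod_cast congrArg (Int.cast : ℤ → ℝ) hxc.symm
    calc (j : ℝ) * Int.fract α - c
        = (x:ℝ) * ((denomSeq α k : ℝ) * Int.fract α - (numSeq α k : ℝ))
          + (y:ℝ) * ((denomSeq α (k+1) : ℝ) * Int.fract α - (numSeq α (k+1) : ℝ)) := by
          rw [hj', hc']; ring
      _ = (x:ℝ) * ((-1)^k * eta α (k+1)) + (y:ℝ) * ((-1)^(k+1) * eta α (k+2)) := by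
          rw [hq0R, hq1R]
      _ = (-1)^k * ((x:ℝ) * eta α (k+1) - (y:ℝ) * eta α (k+2)) := by ring
  rw [key2, abs_mul, abs_pow, abs_neg, abs_one, one_pow, one_mul]
  have hep1 : 0 < eta α (k+1) := eta_pos h (k+1)
  have hep2 : 0 < eta α (k+2) := eta_pos h (k+2)
  have hee : eta α (k+2) ≤ eta α (k+1) := eta_anti h (k+1)
  have hq0pos : (1:ℤ) ≤ (denomSeq α k : ℤ) := by exact_mod_cast denomSeq_pos h k
  have hq1pos : (1:ℤ) ≤ (denomSeq α (k+1) : ℤ) := by exact_mod_cast denomSeq_pos h (k+1)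
  have hjq1 : (j:ℤ) < (denomSeq α (k+1) : ℤ) := by exact_mod_cast hj2
  have hj1' : (1:ℤ) ≤ (j:ℤ) := by exact_mod_cast hj1
  rcases lt_trichotomy y 0 with hy | hy | hy
  · -- y < 0; then x > 0
    have hy' : y ≤ -1 := by omega
    have hyq : y * (denomSeq α (k+1) : ℤ) ≤ -1 := by
      have := mul_le_mul_of_nonneg_right hy' (show (0:ℤ) ≤ (denomSeq α (k+1) : ℤ) by linarith)
      linarith
    have hxq : 1 ≤ x * (denomSeq α k : ℤ) := by linarith [hxj]
    have hx : 1 ≤ x := by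
      by_contra hc
      push_neg at hc
      have h0x : x ≤ 0 := by omega
      have : x * (denomSeq α k : ℤ) ≤ 0 := mul_nonpos_of_nonpos_of_nonneg h0x (by linarith)
      omega
    have hx1 : (1:ℝ) ≤ (x:ℝ) := by exact_mod_cast hx
    have hy1 : (y:ℝ) ≤ -1 := by exact_mod_cast hy'
    have h1 : eta α (k+1) ≤ (x:ℝ) * eta α (k+1) := by
      nlinarith [mul_le_mul_of_nonneg_right hx1 hep1.le]
    have h2 : 0 ≤ -((y:ℝ) * eta α (k+2)) := by
      nlinarith [mul_le_mul_of_nonneg_right hy1 hep2.le]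
    have h3 : 0 ≤ (x:ℝ) * eta α (k+1) - (y:ℝ) * eta α (k+2) := by linarith
    rw [abs_of_nonneg h3]
    linarith
  · subst hy
    simp only [zero_mul, add_zero] at hxj
    have hx : 1 ≤ x := by
      by_contra hc
      push_neg at hc
      have h0x : x ≤ 0 := by omega
      have : x * (denomSeq α k : ℤ) ≤ 0 := mul_nonpos_of_nonpos_of_nonneg h0x (by linarith)
      omega
    have hx1 : (1:ℝ) ≤ (x:ℝ) := by exact_mod_cast hx
    have h1 : eta α (k+1) ≤ (x:ℝ) * eta α (k+1) := by
      nlinarith [mul_le_mul_of_nonneg_right hx1 hep1.le]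
    have h3 : 0 ≤ (x:ℝ) * eta α (k+1) - ((0:ℤ):ℝ) * eta α (k+2) := by
      push_cast; linarith
    rw [abs_of_nonneg h3]
    push_cast
    linarith
  · -- y > 0; then x < 0
    have hy' : 1 ≤ y := by omega
    have hyq : (denomSeq α (k+1) : ℤ) ≤ y * (denomSeq α (k+1) : ℤ) :=
      le_mul_of_one_le_left (by linarith) hy'
    have hxq : x * (denomSeq α k : ℤ) ≤ -1 := by linarith [hxj, hjq1]
    have hx : x ≤ -1 := by
      by_contra hc
      push_neg at hc
      have h0x : 0 ≤ x := by omega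
      have : 0 ≤ x * (denomSeq α k : ℤ) := mul_nonneg h0x (by linarith)
      omega
    have hx1 : (x:ℝ) ≤ -1 := by exact_mod_cast hx
    have hy1 : (1:ℝ) ≤ (y:ℝ) := by exact_mod_cast hy'
    have h1 : (x:ℝ) * eta α (k+1) ≤ -(eta α (k+1)) := by
      nlinarith [mul_le_mul_of_nonneg_right hx1 hep1.le]
    have h2 : 0 ≤ (y:ℝ) * eta α (k+2) := by positivity
    have h3 : (x:ℝ) * eta α (k+1) - (y:ℝ) * eta α (k+2) ≤ 0 := by linarith
    rw [abs_of_nonpos h3]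
    linarith

lemma kron_fract (i : ℕ) : kron α i = Int.fract (i * Int.fract α) := by
  unfold kron
  rw [Int.fract_eq_fract]
  exact ⟨i * ⌊α⌋, by rw [Int.fract]; push_cast; ring⟩

lemma coprime_pq (h : Irrational α) (k : ℕ) : Nat.Coprime (numSeq α k) (denomSeq α k) := by
  have he := detE' (α := α) k
  have : IsCoprime (numSeq α k : ℤ) (denomSeq α k : ℤ) := by
    refine ⟨-((-1)^k * (denomSeq α (k+1) : ℤ)), (-1)^k * (numSeq α (k+1) : ℤ), ?_⟩
    have h2 : ((-1:ℤ)^k) * ((-1:ℤ)^k) = 1 := by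
      rw [← pow_add, show k + k = 2*k from by ring, pow_mul]; norm_num
    calc -((-1:ℤ)^k * (denomSeq α (k+1) : ℤ)) * (numSeq α k : ℤ)
        + (-1:ℤ)^k * (numSeq α (k+1) : ℤ) * (denomSeq α k : ℤ)
        = (-1:ℤ)^k * ((numSeq α (k+1) : ℤ) * (denomSeq α k : ℤ)
            - (numSeq α k : ℤ) * (denomSeq α (k+1) : ℤ)) := by ring
      _ = 1 := by rw [he, h2]
  rw [Int.isCoprime_iff_gcd_eq_one] at this
  exact_mod_cast this

lemma mod_bij (h : Irrational α) (k : ℕ) :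
    ∀ j < denomSeq α k, ∃ i < denomSeq α k, (i * numSeq α k) % denomSeq α k = j := by
  have hq : 0 < denomSeq α k := denomSeq_pos h k
  set q := denomSeq α k
  set p := numSeq α k
  let φ : Fin q → Fin q := fun i => ⟨(i.1 * p) % q, Nat.mod_lt _ hq⟩
  have hinj : Function.Injective φ := by
    intro a b hab
    have hmod : (a.1 * p) % q = (b.1 * p) % q := congrArg Fin.val hab
    have hdvd : (q:ℤ) ∣ ((a.1 : ℤ) - b.1) * p := by
      have := Int.emod_emod_of_dvd ((a.1 : ℤ) * p) (dvd_refl (q:ℤ))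
      have h1 : ((a.1 * p : ℕ) : ℤ) % q = ((b.1 * p : ℕ) : ℤ) % q := by
        exact_mod_cast congrArg (Nat.cast : ℕ → ℤ) hmod
      have h2 : (((a.1 : ℤ) * p) - ((b.1 : ℤ) * p)) % q = 0 := by
        push_cast at h1
        rw [Int.sub_emod, h1, sub_self, Int.zero_emod]
      have h3 : ((a.1 : ℤ) - b.1) * p = ((a.1 : ℤ) * p) - ((b.1 : ℤ) * p) := by ring
      rw [h3]
      exact Int.dvd_of_emod_eq_zero h2
    have hcop : IsCoprime (q:ℤ) (p:ℤ) := by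
      rw [Int.isCoprime_iff_gcd_eq_one, Int.gcd_natCast_natCast]
      exact Nat.Coprime.gcd_eq_one (Nat.Coprime.symm (coprime_pq h k))
    have hdvd2 : (q:ℤ) ∣ ((a.1 : ℤ) - b.1) := (hcop.dvd_of_dvd_mul_right) hdvd
    have ha := a.2
    have hb := b.2
    apply Fin.ext
    obtain ⟨c, hc⟩ := hdvd2
    have hlt1 : (a.1 : ℤ) < q := by exact_mod_cast ha
    have hlt2 : (b.1 : ℤ) < q := by exact_mod_cast hb
    have ha0 : (0:ℤ) ≤ (a.1 : ℤ) := Int.ofNat_nonneg _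
    have hb0 : (0:ℤ) ≤ (b.1 : ℤ) := Int.ofNat_nonneg _
    have hq' : (0:ℤ) < q := by exact_mod_cast hq
    have hc0 : c = 0 := by
      rcases lt_trichotomy c 0 with hcc | hcc | hcc
      · exfalso
        have : (q:ℤ) * c ≤ q * (-1) := mul_le_mul_of_nonneg_left (by omega) (by omega)
        nlinarith
      · exact hcc
      · exfalso
        have : (q:ℤ) * 1 ≤ q * c := mul_le_mul_of_nonneg_left (by omega) (by omega)
        nlinarith
    rw [hc0, mul_zero] at hc
    have : (a.1 : ℤ) = b.1 := by omega
    exact_mod_cast this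
  have hsurj : Function.Surjective φ := Finite.surjective_of_injective hinj
  intro j hj
  obtain ⟨i, hi⟩ := hsurj ⟨j, hj⟩
  exact ⟨i.1, i.2, congrArg Fin.val hi⟩

/-- η_k q_k < 1 -/
lemma eta_q_lt_one (h : Irrational α) (k : ℕ) :
    (denomSeq α k : ℝ) * eta α (k+1) < 1 := by
  have hF := F2 h (k+1)
  have h1 : (denomSeq α k : ℝ) ≤ (denomSeq α (k+1) : ℝ) := by
    exact_mod_cast denomSeq_mono h k
  have h2 : 0 < eta α (k+1) := eta_pos h (k+1)
  have h3 : 0 < eta α (k+2) := eta_pos h (k+2)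
  have h4 : (1:ℝ) ≤ (denomSeq α k : ℝ) := by exact_mod_cast denomSeq_pos h k
  have : (denomPred α (k+1) : ℝ) = (denomSeq α k : ℝ) := rfl
  rw [this] at hF
  nlinarith

/-- 1/q_k ≤ η_{k-1} + η_k, in multiplied form: 1 ≤ q_k (η_{k-1} + η_k) -/
lemma one_le_q_eta (h : Irrational α) (k : ℕ) :
    1 ≤ (denomSeq α k : ℝ) * (eta α k + eta α (k+1)) := by
  have hF := F2 h k
  have h2 : 0 < eta α (k+1) := eta_pos h (k+1)
  have h4 : (denomPred α k : ℝ) ≤ (denomSeq α k : ℝ) := by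
    exact_mod_cast (by cases k with
      | zero => simp [denomPred, denomSeq]
      | succ n => exact denomSeq_mono h n : denomPred α k ≤ denomSeq α k)
  nlinarith

set_option maxHeartbeats 1000000 in
/-- The grid lemma: the points with index < q_k sit near the grid j/q_k, all on one side. -/
lemma grid (h : Irrational α) (k : ℕ) :
    ∃ lo hi : ℝ, lo ≤ 0 ∧ 0 ≤ hi ∧ hi - lo ≤ eta α (k+1) ∧
      ∀ j < denomSeq α k, ∃ i < denomSeq α k,
        kron α i ∈ Set.Icc ((j:ℝ)/(denomSeq α k) + lo) ((j:ℝ)/(denomSeq α k) + hi) := by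
  have hq : 0 < denomSeq α k := denomSeq_pos h k
  have hqR : (0:ℝ) < (denomSeq α k : ℝ) := by exact_mod_cast hq
  have hL := (L1 h k).1
  have heta : 0 < eta α (k+1) := eta_pos h (k+1)
  have hetaq : eta α (k+1) < 1 / (denomSeq α k : ℝ) := by
    rw [lt_div_iff₀ hqR]
    have := eta_q_lt_one h k
    linarith [this]
  rcases Nat.even_or_odd k with hk | hk
  · -- even: s_k β - p_k = η_k, points in [j/q, j/q + η]
    refine ⟨0, eta α (k+1), le_refl 0, heta.le, by linarith, ?_⟩
    intro j hj
    obtain ⟨i, hi, hij⟩ := mod_bij h k j hj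
    refine ⟨i, hi, ?_⟩
    have hβ : Int.fract α = ((numSeq α k : ℝ) + eta α (k+1)) / (denomSeq α k : ℝ) := by
      rw [hk.neg_one_pow] at hL
      field_simp
      linarith [hL]
    have hdecomp : (i:ℝ) * Int.fract α
        = ((i * numSeq α k / denomSeq α k : ℕ) : ℝ) + ((j:ℝ)/(denomSeq α k))
          + ((i:ℝ)/(denomSeq α k)) * eta α (k+1) := by
      rw [hβ]
      have hdm : (i * numSeq α k : ℕ) = denomSeq α k * (i * numSeq α k / denomSeq α k) + j := by
        rw [← hij]; exact (Nat.div_add_mod _ _).symm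
      have hdmR : ((i:ℝ) * (numSeq α k : ℝ))
          = (denomSeq α k : ℝ) * ((i * numSeq α k / denomSeq α k : ℕ) : ℝ) + (j:ℝ) := by
        exact_mod_cast congrArg (Nat.cast : ℕ → ℝ) hdm
      field_simp
      nlinarith [hdmR]
    have hfrac : (0:ℝ) ≤ (j:ℝ)/(denomSeq α k) + ((i:ℝ)/(denomSeq α k)) * eta α (k+1) := by
      positivity
    have hiq : ((i:ℝ)/(denomSeq α k)) * eta α (k+1) ≤ eta α (k+1) := by
      have : (i:ℝ)/(denomSeq α k) ≤ 1 := by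
        rw [div_le_one hqR]
        exact_mod_cast hi.le
      nlinarith
    have hjlt : (j:ℝ) ≤ (denomSeq α k : ℝ) - 1 := by
      have : (j:ℕ) + 1 ≤ denomSeq α k := hj
      have : ((j:ℕ):ℝ) + 1 ≤ (denomSeq α k : ℝ) := by exact_mod_cast this
      linarith
    have hxlt : (j:ℝ)/(denomSeq α k) + ((i:ℝ)/(denomSeq α k)) * eta α (k+1) < 1 := by
      have h1 : (j:ℝ)/(denomSeq α k) ≤ 1 - 1/(denomSeq α k) := by
        rw [div_le_iff₀ hqR]
        field_simp
        linarith
      have h2 : ((i:ℝ)/(denomSeq α k)) * eta α (k+1) < 1/(denomSeq α k) := by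
        have hia : (i:ℝ)/(denomSeq α k) ≤ 1 := by
          rw [div_le_one hqR]; exact_mod_cast hi.le
        have hib : 0 ≤ (i:ℝ)/(denomSeq α k) := by positivity
        calc ((i:ℝ)/(denomSeq α k)) * eta α (k+1) ≤ 1 * eta α (k+1) := by nlinarith
          _ < 1/(denomSeq α k) := by rw [one_mul]; exact hetaq
      linarith
    have hkron : kron α i = (j:ℝ)/(denomSeq α k) + ((i:ℝ)/(denomSeq α k)) * eta α (k+1) := by
      rw [kron_fract, hdecomp,
        show ((i * numSeq α k / denomSeq α k : ℕ) : ℝ)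
          = (((i * numSeq α k / denomSeq α k : ℕ) : ℤ) : ℝ) from (Int.cast_natCast _).symm,
        add_assoc, Int.fract_intCast_add, Int.fract_eq_self.2 ⟨by positivity, hxlt⟩]
    rw [hkron]
    constructor
    · have : 0 ≤ ((i:ℝ)/(denomSeq α k)) * eta α (k+1) := by positivity
      linarith
    · linarith [hiq]
  · -- odd: s_k β - p_k = -η_k, points in [j/q - η, j/q]
    refine ⟨-(eta α (k+1)), 0, by linarith, le_refl 0, by linarith, ?_⟩
    intro j hj
    obtain ⟨i, hi, hij⟩ := mod_bij h k j hj
    refine ⟨i, hi, ?_⟩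
    have hβ : Int.fract α = ((numSeq α k : ℝ) - eta α (k+1)) / (denomSeq α k : ℝ) := by
      rw [hk.neg_one_pow] at hL
      field_simp
      linarith [hL]
    have hdecomp : (i:ℝ) * Int.fract α
        = ((i * numSeq α k / denomSeq α k : ℕ) : ℝ) + ((j:ℝ)/(denomSeq α k))
          - ((i:ℝ)/(denomSeq α k)) * eta α (k+1) := by
      rw [hβ]
      have hdm : (i * numSeq α k : ℕ) = denomSeq α k * (i * numSeq α k / denomSeq α k) + j := by
        rw [← hij]; exact (Nat.div_add_mod _ _).symm
      have hdmR : ((i:ℝ) * (numSeq α k : ℝ))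
          = (denomSeq α k : ℝ) * ((i * numSeq α k / denomSeq α k : ℕ) : ℝ) + (j:ℝ) := by
        exact_mod_cast congrArg (Nat.cast : ℕ → ℝ) hdm
      field_simp
      nlinarith [hdmR]
    have hiq : ((i:ℝ)/(denomSeq α k)) * eta α (k+1) ≤ eta α (k+1) := by
      have h1 : (i:ℝ)/(denomSeq α k) ≤ 1 := by
        rw [div_le_one hqR]; exact_mod_cast hi.le
      have h2 : 0 ≤ (i:ℝ)/(denomSeq α k) := by positivity
      nlinarith
    rcases Nat.eq_zero_or_pos j with hj0 | hj0
    · -- j = 0 forces i = 0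
      subst hj0
      have hi0 : i = 0 := by
        by_contra hne
        have h1 : 1 ≤ i := Nat.pos_of_ne_zero hne
        -- i*p % q = 0 and 0*p % q = 0, injectivity gives i = 0; redo via dvd
        have hdvd : denomSeq α k ∣ i * numSeq α k := Nat.dvd_of_mod_eq_zero hij
        have hcop : Nat.Coprime (numSeq α k) (denomSeq α k) := coprime_pq h k
        have hdvd2 : denomSeq α k ∣ i := (Nat.Coprime.dvd_of_dvd_mul_right
          (Nat.Coprime.symm hcop) hdvd)
        have := Nat.le_of_dvd h1 hdvd2
        omega
      subst hi0
      have : kron α 0 = 0 := by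
        unfold kron
        simp
      rw [this]
      constructor
      · simp only [Nat.cast_zero, zero_div, zero_add]
        linarith
      · simp
    · -- j ≥ 1
      have hjR : (1:ℝ) ≤ (j:ℝ) := by exact_mod_cast hj0
      have h1 : 1/(denomSeq α k : ℝ) ≤ (j:ℝ)/(denomSeq α k) := by gcongr
      have hi0 : 0 ≤ ((i:ℝ)/(denomSeq α k)) * eta α (k+1) := by positivity
      have hxpos : 0 ≤ (j:ℝ)/(denomSeq α k) - ((i:ℝ)/(denomSeq α k)) * eta α (k+1) := by
        have h2 : ((i:ℝ)/(denomSeq α k)) * eta α (k+1) ≤ eta α (k+1) := hiq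
        linarith [hetaq]
      have hjlt : (j:ℝ) ≤ (denomSeq α k : ℝ) - 1 := by
        have : (j:ℕ) + 1 ≤ denomSeq α k := hj
        have : ((j:ℕ):ℝ) + 1 ≤ (denomSeq α k : ℝ) := by exact_mod_cast this
        linarith
      have hxlt : (j:ℝ)/(denomSeq α k) - ((i:ℝ)/(denomSeq α k)) * eta α (k+1) < 1 := by
        have h2 : (j:ℝ)/(denomSeq α k) < 1 := by
          rw [div_lt_one hqR]; linarith
        linarith
      have hkron : kron α i
          = (j:ℝ)/(denomSeq α k) - ((i:ℝ)/(denomSeq α k)) * eta α (k+1) := by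
        rw [kron_fract, hdecomp,
          show ((i * numSeq α k / denomSeq α k : ℕ) : ℝ)
            = (((i * numSeq α k / denomSeq α k : ℕ) : ℤ) : ℝ) from (Int.cast_natCast _).symm]
        rw [show (((i * numSeq α k / denomSeq α k : ℕ) : ℤ) : ℝ) + (j:ℝ)/(denomSeq α k)
            - ((i:ℝ)/(denomSeq α k)) * eta α (k+1)
            = (((i * numSeq α k / denomSeq α k : ℕ) : ℤ) : ℝ) + ((j:ℝ)/(denomSeq α k)
            - ((i:ℝ)/(denomSeq α k)) * eta α (k+1)) from by ring]
        rw [Int.fract_intCast_add, Int.fract_eq_self.2 ⟨hxpos, hxlt⟩]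
      rw [hkron]
      constructor
      · linarith [hiq]
      · linarith [hi0]

/-- For odd m, the point with index s_m is at 1 - η_m. -/
lemma Zpoint (h : Irrational α) (m : ℕ) (hm : Odd m) :
    kron α (denomSeq α m) = 1 - eta α (m+1) := by
  have hL := (L1 h m).1
  rw [hm.neg_one_pow] at hL
  have heta1 : 0 < eta α (m+1) := eta_pos h (m+1)
  have heta2 : eta α (m+1) < 1 := by
    calc eta α (m+1) = eta α m * alphaSeq α m := rfl
      _ < 1 := by
        nlinarith [eta_pos h m, eta_le_one h m, alphaSeq_pos h m, alphaSeq_lt_one (α := α) m]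
  have hfr : (denomSeq α m : ℝ) * Int.fract α = (numSeq α m : ℝ) - eta α (m+1) := by
    linarith
  rw [kron_fract, hfr]
  rw [show (numSeq α m : ℝ) - eta α (m+1) = -(eta α (m+1)) + ((numSeq α m : ℤ) : ℝ) from by
    push_cast; ring]
  rw [Int.fract_add_intCast]
  rw [Int.fract_neg, Int.fract_eq_self.2 ⟨heta1.le, heta2⟩]
  rw [Int.fract_eq_self.2 ⟨heta1.le, heta2⟩]
  exact ne_of_gt heta1

/-- choice of the scale k for given n -/
lemma exists_k (h : Irrational α) (n : ℕ) (hn : 2 ≤ n) :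
    ∃ k, denomSeq α k ≤ n - 1 ∧ n - 1 < denomSeq α (k+1) := by
  have hex : ∃ m, n - 1 < denomSeq α m := ⟨n, by have := denomSeq_ge h n; omega⟩
  classical
  set M := Nat.find hex with hM
  have hMspec : n - 1 < denomSeq α M := Nat.find_spec hex
  have hM1 : 1 ≤ M := by
    by_contra hc
    push_neg at hc
    interval_cases M
    · rw [show denomSeq α 0 = 1 from rfl] at hMspec
      omega
  refine ⟨M - 1, ?_, ?_⟩
  · have := Nat.find_min hex (m := M - 1) (by omega)
    omega
  · rw [show M - 1 + 1 = M by omega]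
    exact hMspec

/-- pairwise separation -/
lemma sep_pair (h : Irrational α) (k n : ℕ) (hnk : n - 1 < denomSeq α (k+1)) (hn : 2 ≤ n)
    (i j : ℕ) (hi : i < n) (hjn : j < n) (hij : i < j) :
    eta α (k+1) ≤ |kron α i - kron α j| := by
  have hsub : ((j - i : ℕ) : ℝ) = (j:ℝ) - (i:ℝ) := by
    have := hij.le
    push_cast [Nat.cast_sub this]
    ring
  have e1 : kron α i = (i:ℝ) * Int.fract α - ⌊(i:ℝ) * Int.fract α⌋ := by
    rw [kron_fract]; rfl
  have e2 : kron α j = (j:ℝ) * Int.fract α - ⌊(j:ℝ) * Int.fract α⌋ := by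
    rw [kron_fract]; rfl
  have hd : kron α i - kron α j
      = -(((j - i : ℕ) : ℝ) * Int.fract α - ((⌊(j:ℝ) * Int.fract α⌋ - ⌊(i:ℝ) * Int.fract α⌋ : ℤ) : ℝ)) := by
    rw [e1, e2, hsub]
    push_cast
    ring
  rw [hd, abs_neg]
  exact bestApprox h k (j - i) (by omega) (by omega) _

/-- The covering lemma, pure real arithmetic. -/
lemma cov (q : ℕ) (hq : 1 ≤ q) (η ηm lo hi : ℝ) (hη : 0 < η) (hlo : lo ≤ 0) (hhi : 0 ≤ hi)
    (hwidth : hi - lo ≤ η) (g : ℕ → ℝ) (Z : ℝ)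
    (hg : ∀ j < q, g j ∈ Set.Icc ((j:ℝ)/q + lo) ((j:ℝ)/q + hi))
    (hZ1 : 1 - ηm ≤ Z) (hZ2 : Z ≤ 1) (y : ℝ) (hy0 : 0 ≤ y) (hy1 : y ≤ 1) :
    (∃ j < q, |y - g j| ≤ max (max η ηm) ((1/q + η)/2)) ∨
      |y - Z| ≤ max (max η ηm) ((1/q + η)/2) := by
  set M := max (max η ηm) ((1/q + η)/2) with hMdef
  have hηM : η ≤ M := le_trans (le_max_left _ _) (le_max_left _ _)
  have hηmM : ηm ≤ M := le_trans (le_max_right _ _) (le_max_left _ _)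
  have hqM : (1/q + η)/2 ≤ M := le_max_right _ _
  have hqR : (0:ℝ) < (q:ℝ) := by exact_mod_cast hq
  set j0 : ℕ := min (⌊y * q⌋).toNat (q - 1) with hj0def
  have hj0q : j0 < q := by omega
  have hj0le : (j0:ℝ)/q ≤ y := by
    rw [div_le_iff₀ hqR]
    have h1 : (j0:ℕ) ≤ (⌊y * q⌋).toNat := min_le_left _ _
    have h2 : ((⌊y * q⌋).toNat : ℝ) ≤ y * q := by
      rcases le_or_gt 0 (⌊y * q⌋) with hf | hf
      · have he : ((⌊y * q⌋).toNat : ℝ) = ((⌊y * q⌋ : ℤ) : ℝ) := by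
          exact_mod_cast congrArg (Int.cast : ℤ → ℝ) (Int.toNat_of_nonneg hf)
        rw [he]
        exact Int.floor_le _
      · have he : (⌊y * q⌋).toNat = 0 := Int.toNat_of_nonpos hf.le
        rw [he]
        simp
        positivity
    calc (j0:ℝ) ≤ ((⌊y * q⌋).toNat : ℝ) := by exact_mod_cast h1
      _ ≤ y * q := h2
  obtain ⟨hgA1, hgA2⟩ := hg j0 hj0q
  set A := g j0
  rcases le_or_gt y A with hcase | hcase
  · -- y ≤ A : close to A
    left
    refine ⟨j0, hj0q, ?_⟩
    rw [abs_of_nonpos (by linarith)]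
    have : A ≤ (j0:ℝ)/q + hi := hgA2
    have : A - y ≤ hi := by linarith
    linarith
  rcases Nat.lt_or_ge (j0+1) q with hjq | hjq
  · -- interior cell
    have hup : y ≤ ((j0:ℝ)+1)/q := by
      have hfl : ⌊y * q⌋ < (j0:ℤ) + 1 := by
        have h1 : (⌊y * q⌋).toNat ≥ j0 + 1 ∨ (⌊y * q⌋).toNat ≤ j0 := by omega
        rcases h1 with h1 | h1
        · exfalso
          have : j0 = q - 1 := by omega
          omega
        · omega
      have := Int.lt_floor_add_one (y * q)
      have h2 : y * q < (j0:ℝ) + 1 := by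
        calc y * q < ⌊y * q⌋ + 1 := Int.lt_floor_add_one _
          _ ≤ (j0:ℝ) + 1 := by
            have : (⌊y * q⌋ : ℝ) ≤ (j0:ℝ) := by exact_mod_cast Int.lt_add_one_iff.mp hfl
            linarith
      rw [le_div_iff₀ hqR]
      linarith [h2]
    obtain ⟨hgB1, hgB2⟩ := hg (j0+1) hjq
    set Bp := g (j0+1)
    rcases le_or_gt Bp y with hcase2 | hcase2
    · left
      refine ⟨j0+1, hjq, ?_⟩
      rw [abs_of_nonneg (by linarith)]
      have h3 : ((j0:ℝ)+1)/q + lo ≤ Bp := by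
        have := hgB1
        push_cast at this ⊢
        linarith
      linarith
    · -- A < y < Bp
      have hAB : Bp - A ≤ 1/q + η := by
        have h3 : ((j0:ℝ)+1)/q + lo ≤ Bp := by push_cast at hgB1 ⊢; linarith
        have h4 : Bp ≤ ((j0:ℝ)+1)/q + hi := by push_cast at hgB2 ⊢; linarith
        have h5 : A ≥ (j0:ℝ)/q + lo := hgA1
        have h6 : ((j0:ℝ)+1)/q - (j0:ℝ)/q = 1/q := by field_simp; ring
        linarith
      rcases le_or_gt (y - A) (Bp - y) with hmin | hmin
      · left
        exact ⟨j0, hj0q, by rw [abs_of_nonneg (by linarith)]; linarith [hqM]⟩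
      · left
        exact ⟨j0+1, hjq, by rw [abs_of_nonpos (by linarith)]; linarith [hqM]⟩
  · -- last cell: j0 = q - 1
    have hj0eq : j0 = q - 1 := by omega
    rcases le_or_gt Z y with hcase2 | hcase2
    · right
      rw [abs_of_nonneg (by linarith)]
      linarith
    · -- A < y < Z
      have hAZ : Z - A ≤ 1/q + η := by
        have h5 : A ≥ (j0:ℝ)/q + lo := hgA1
        have h6 : (j0:ℝ)/q = 1 - 1/q := by
          rw [hj0eq]
          have : ((q - 1 : ℕ) : ℝ) = (q:ℝ) - 1 := by
            push_cast [Nat.cast_sub hq]; ring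
          rw [this]
          field_simp
        have : Z - A ≤ 1 - ((1 - 1/q) + lo) := by linarith
        linarith
      rcases le_or_gt (y - A) (Z - y) with hmin | hmin
      · left
        exact ⟨j0, hj0q, by rw [abs_of_nonneg (by linarith)]; linarith [hqM]⟩
      · right
        rw [abs_of_nonpos (by linarith)]
        linarith [hqM]


set_option maxHeartbeats 1000000 in
/-- If `α` is badly approximable then the Kronecker sequence is quasi-uniform,
with mesh ratio bounded by `2 + 2·sup_{j≥1} a_j`. -/
theorem kronecker_badly_approximable_quasi_uniform (α : ℝ) (hpos : 0 < α)
    (hirr : Irrational α) (B : ℕ) (hB : ∀ j ≥ 1, partialQuot α j ≤ B) :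
    ∀ n ≥ 2, fillDist (kron α) n / sepRad (kron α) n ≤
      2 + 2 * ⨆ j : ℕ, (partialQuot α (j + 1) : ℝ) := by
  intro n hn
  classical
  set A := ⨆ j : ℕ, (partialQuot α (j + 1) : ℝ) with hAdef
  have hbdd : BddAbove (Set.range fun j : ℕ => (partialQuot α (j + 1) : ℝ)) := by
    refine ⟨(B:ℝ), ?_⟩
    rintro _ ⟨j, rfl⟩
    show (partialQuot α (j + 1) : ℝ) ≤ (B:ℝ)
    exact_mod_cast hB (j+1) (by omega)
  have hAge : ∀ j : ℕ, (partialQuot α (j + 1) : ℝ) ≤ A := fun j => le_ciSup hbdd j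
  have hA1 : (1:ℝ) ≤ A := by
    refine le_trans ?_ (hAge 0)
    exact_mod_cast partialQuot_pos hirr 0
  have hA0 : (0:ℝ) ≤ A := by linarith
  obtain ⟨k, hk1, hk2⟩ := exists_k hirr n hn
  have hηpos : 0 < eta α (k+1) := eta_pos hirr (k+1)
  have hrel : eta α k ≤ (A + 1) * eta α (k+1) := by
    have hR := etaR hirr k
    have h1 := hAge k
    have h2 : eta α (k+2) ≤ eta α (k+1) := eta_anti hirr (k+1)
    have h3 : 0 ≤ (partialQuot α (k+1) : ℝ) := by positivity
    nlinarith [hηpos]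
  -- separation radius bound
  haveI hne : Nonempty {p : Fin n × Fin n // p.1 < p.2} := by
    refine ⟨⟨(⟨0, by omega⟩, ⟨1, by omega⟩), ?_⟩⟩
    simp [Fin.lt_def]
  have hsep : eta α (k+1) / 2 ≤ sepRad (kron α) n := by
    unfold sepRad
    have hinf : eta α (k+1) ≤ ⨅ p : {p : Fin n × Fin n // p.1 < p.2},
        |kron α p.1.1 - kron α p.1.2| := by
      apply le_ciInf
      intro p
      exact sep_pair hirr k n hk2 hn p.1.1 p.1.2 p.1.1.2 p.1.2.2 p.2
    linarith
  have hseppos : 0 < sepRad (kron α) n := by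
    have : 0 < eta α (k+1) / 2 := by linarith
    linarith
  -- fill distance bound
  have hq1 : 1 ≤ denomSeq α k := denomSeq_pos hirr k
  have hqn : denomSeq α k ≤ n - 1 := hk1
  obtain ⟨lo, hi, hlo, hhi, hwidth, hgrid⟩ := grid hirr k
  choose I hI1 hI2 using hgrid
  set g : ℕ → ℝ := fun j => if h : j < denomSeq α k then kron α (I j h) else 0 with hgdef
  have hg : ∀ j < denomSeq α k, g j ∈ Set.Icc
      ((j:ℝ)/(denomSeq α k) + lo) ((j:ℝ)/(denomSeq α k) + hi) := by
    intro j hj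
    rw [hgdef]
    simp only [dif_pos hj]
    exact hI2 j hj
  -- choose Z, ηm, zi
  obtain ⟨Z, ηm, zi, hzi, hZval, hZ1, hZ2, hMη⟩ :
      ∃ (Z ηm : ℝ) (zi : ℕ), zi < n ∧ Z = kron α zi ∧ 1 - ηm ≤ Z ∧ Z ≤ 1 ∧
        max (max (eta α (k+1)) ηm) ((1/(denomSeq α k : ℝ) + eta α (k+1))/2)
          ≤ (A + 1) * eta α (k+1) := by
    rcases Nat.eq_zero_or_pos k with hk0 | hkpos
    · -- k = 0
      subst hk0
      have hq0 : denomSeq α 0 = 1 := rfl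
      have heta1 : eta α 1 = Int.fract α := by
        rw [show eta α 1 = eta α 0 * alphaSeq α 0 from rfl,
          show eta α 0 = (1:ℝ) from rfl, show alphaSeq α 0 = Int.fract α from rfl, one_mul]
      have hβpos : 0 < Int.fract α := by
        have := alphaSeq_pos hirr 0
        rwa [show alphaSeq α 0 = Int.fract α from rfl] at this
      have hβlt : Int.fract α < 1 := Int.fract_lt_one α
      have hkey : 1 < ((partialQuot α 1 : ℝ) + 1) * Int.fract α := by
        have hcast : (partialQuot α 1 : ℝ) = (⌊1 / alphaSeq α 0⌋ : ℤ) := partialQuot_cast hirr 0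
        have hfl : (1 / alphaSeq α 0) - 1 < ((⌊1 / alphaSeq α 0⌋ : ℤ) : ℝ) := by
          exact_mod_cast Int.sub_one_lt_floor (1 / alphaSeq α 0)
        rw [hcast]
        rw [show alphaSeq α 0 = Int.fract α from rfl] at hfl ⊢
        have h5 : 1 / Int.fract α < (⌊1 / Int.fract α⌋ : ℝ) + 1 := by
          rw [show alphaSeq α 0 = Int.fract α from rfl] at hcast
          push_cast at hfl ⊢
          linarith
        calc (1:ℝ) = (1 / Int.fract α) * Int.fract α := by field_simp
          _ < (((⌊1 / alphaSeq α 0⌋ : ℤ) : ℝ) + 1) * Int.fract α := by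
              rw [show alphaSeq α 0 = Int.fract α from rfl]
              push_cast
              nlinarith [hfl, hβpos]
      have hkeyA : 1 < (A + 1) * Int.fract α := by
        have := hAge 0
        nlinarith [hβpos]
      refine ⟨kron α 1, 1 - Int.fract α, 1, by omega, rfl, ?_, ?_, ?_⟩
      · have : kron α 1 = Int.fract α := by
          unfold kron
          norm_num
        rw [this]
        linarith
      · unfold kron
        exact (Int.fract_lt_one _).le
      · have hq0R : ((denomSeq α 0 : ℕ) : ℝ) = 1 := by rw [hq0]; norm_num
        rw [show eta α (0+1) = eta α 1 from rfl, heta1, hq0R]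
        apply max_le (max_le ?_ ?_) ?_
        · nlinarith [hβpos, hA0]
        · linarith [hkeyA]
        · have h3 : (1/(1:ℝ) + Int.fract α)/2 ≤ 1 := by
            rw [one_div_one]
            linarith
          linarith [hkeyA]
    · -- k ≥ 1
      obtain ⟨m, hmodd, hmle, hm1ge⟩ : ∃ m, Odd m ∧ m ≤ k ∧ k ≤ m + 1 := by
        rcases Nat.even_or_odd k with hke | hko
        · refine ⟨k - 1, ?_, by omega, by omega⟩
          exact Nat.Even.sub_odd hkpos hke odd_one
        · exact ⟨k, hko, le_refl k, by omega⟩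
      have hZv := Zpoint hirr m hmodd
      have hsm : denomSeq α m ≤ denomSeq α k := by
        rcases Nat.eq_or_lt_of_le hmle with he | hl
        · rw [he]
        · have : m + 1 = k := by omega
          rw [← this]
          exact denomSeq_mono hirr m
      have hηm : eta α (m+1) ≤ eta α k := by
        rcases Nat.eq_or_lt_of_le hm1ge with he | hl
        · rw [← he]
        · have : m = k := by omega
          rw [this]
          exact eta_anti hirr k
      refine ⟨kron α (denomSeq α m), eta α (m+1), denomSeq α m, by omega, rfl, ?_, ?_, ?_⟩
      · rw [hZv]
      · rw [hZv]
        have := eta_pos hirr (m+1)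
        linarith
      · have hqetaR : 1/(denomSeq α k : ℝ) ≤ eta α k + eta α (k+1) := by
          have h1 := one_le_q_eta hirr k
          have hqpos : (0:ℝ) < (denomSeq α k : ℝ) := by exact_mod_cast hq1
          rw [div_le_iff₀ hqpos]
          nlinarith
        apply max_le (max_le ?_ ?_) ?_
        · nlinarith [hηpos]
        · linarith [hηm, hrel]
        · have : (1/(denomSeq α k : ℝ) + eta α (k+1))/2 ≤ (eta α k + 2 * eta α (k+1))/2 := by
            linarith
          have h2 : (eta α k + 2 * eta α (k+1))/2 ≤ ((A+1) * eta α (k+1) + 2 * eta α (k+1))/2 := by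
            linarith [hrel]
          have h3 : ((A+1) * eta α (k+1) + 2 * eta α (k+1))/2 ≤ (A+1) * eta α (k+1) := by
            nlinarith [hηpos, hA1]
          linarith
  -- fill bound via cov
  have hfill : fillDist (kron α) n ≤ (A + 1) * eta α (k+1) := by
    unfold fillDist
    haveI : Nonempty (Set.Icc (0:ℝ) 1) := ⟨⟨0, by norm_num⟩⟩
    apply ciSup_le
    intro y
    obtain ⟨hy0, hy1⟩ := y.2
    have hcov := cov (denomSeq α k) hq1 (eta α (k+1)) ηm lo hi hηpos hlo hhi hwidth g Z
      hg hZ1 hZ2 (y : ℝ) hy0 hy1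
    have hbb : BddBelow (Set.range fun i : Fin n => |(y:ℝ) - kron α i|) := by
      refine ⟨0, ?_⟩
      rintro _ ⟨i, rfl⟩
      positivity
    rcases hcov with ⟨j, hj, hjb⟩ | hzb
    · have hidx : I j hj < n := by
        have := hI1 j hj
        omega
      refine ciInf_le_of_le hbb ⟨I j hj, hidx⟩ ?_
      have : g j = kron α (I j hj) := by rw [hgdef]; simp only [dif_pos hj]
      rw [← this]
      exact le_trans hjb hMη
    · refine ciInf_le_of_le hbb ⟨zi, hzi⟩ ?_
      rw [← hZval]
      exact le_trans hzb hMη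
  -- conclude
  rw [div_le_iff₀ hseppos]
  have h1 : (A + 1) * eta α (k+1) = (2 + 2*A) * (eta α (k+1)/2) := by ring
  have h2 : (2 + 2*A) * (eta α (k+1)/2) ≤ (2 + 2*A) * sepRad (kron α) n := by
    apply mul_le_mul_of_nonneg_left hsep
    linarith
  linarith [hfill]
end
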